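/- arXiv:1401.6519 — 14 statements merged into one kernel-verified Lean document; each statement's English description precedes it below -/
import Mathlib

section
/- If a topological space X is radial at a point x and A ⊆ X satisfies x ∈ closure(A), then there exists a regular cardinal λ ≤ |X| and an injective transfinite sequence (x_α)_{α<λ} with all terms in A that converges to x strictly, meaning x is not in the closure of any proper initial segment {x_β : β < α}. -/
set_option linter.unusedVariables false


open Filter Topology Set

universe u v

/-- `X` is radial at `x`: every set with `x` in its closure contains a transfinite
sequence (an ordinal-indexed net, with nonempty domain) converging to `x`. -/
def RadialAt {X : Type u} [TopologicalSpace X] (x : X) : Prop :=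
  ∀ A : Set X, x ∈ closure A →
    ∃ o : Ordinal.{u}, o ≠ 0 ∧ ∃ f : o.ToType → X,
      (∀ a, f a ∈ A) ∧ Filter.Tendsto f Filter.atTop (nhds x)

instance instIsWellOrderToTypeLT (o : Ordinal.{u}) :
    IsWellOrder o.ToType ((· < ·) : o.ToType → o.ToType → Prop) := isWellOrder_lt

section Aux

variable {X : Type u} [TopologicalSpace X]

/-- The property that `B` contains a transfinite sequence of length `o` converging to `x`. -/
def QQ (x : X) (B : Set X) (o : Ordinal.{u}) : Prop :=
  o ≠ 0 ∧ ∃ f : o.ToType → X, (∀ a, f a ∈ B) ∧ Filter.Tendsto f Filter.atTop (nhds x)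

theorem QQ.mono {x : X} {B B' : Set X} {o : Ordinal.{u}} (hBB : B ⊆ B') (h : QQ x B o) :
    QQ x B' o := by
  obtain ⟨ho, f, hf, ht⟩ := h
  exact ⟨ho, f, fun a => hBB (hf a), ht⟩

/-- A monotone map between ordinal types with unbounded range tends to `atTop`. -/
theorem tendsto_atTop_of_unbounded_range {o l : Ordinal.{u}} (hl : l ≠ 0)
    (g : l.ToType → o.ToType) (hmono : Monotone g)
    (hub : Set.Unbounded (· < ·) (Set.range g)) :
    Filter.Tendsto g Filter.atTop Filter.atTop := by
  haveI : Nonempty l.ToType := Ordinal.nonempty_toType_iff.2 hl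
  rw [tendsto_atTop]
  intro b
  obtain ⟨a, ⟨ξ, rfl⟩, hba⟩ := hub b
  filter_upwards [eventually_ge_atTop ξ] with η hη
  exact le_trans (not_lt.1 hba) (hmono hη)

/-- From a subset `T` of `o.ToType` with `type (Subrel (<) T) = l`, extract a strictly
monotone map `l.ToType → o.ToType` with range `T`. -/
theorem exists_strictMono_range_eq {o l : Ordinal.{u}} {T : Set o.ToType}
    (h : Ordinal.type (Subrel ((· < ·) : o.ToType → o.ToType → Prop) (· ∈ T)) = l) :
    ∃ g : l.ToType → o.ToType, StrictMono g ∧ Set.range g = T := by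
  obtain ⟨e⟩ := Ordinal.type_eq.1 (h.trans (Ordinal.type_toType l).symm)
  refine ⟨fun ξ => (e.symm ξ).1, ?_, ?_⟩
  · intro ξ η hlt
    exact e.symm.map_rel_iff.2 hlt
  · ext a
    constructor
    · rintro ⟨ξ, rfl⟩
      exact (e.symm ξ).2
    · intro ha
      exact ⟨e ⟨a, ha⟩, by simp⟩

/-- Replacing a convergent transfinite sequence by a cofinal subsequence. -/
theorem QQ.cof {x : X} {B : Set X} {o : Ordinal.{u}} (h : QQ x B o) : QQ x B o.cof.ord := by
  obtain ⟨ho, f, hf, ht⟩ := h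
  obtain ⟨S, hub, htype⟩ :=
    Ordinal.exists_ord_cof_eq o.ToType
  rw [Ordinal.cof_toType] at htype
  obtain ⟨g, hmono, hrange⟩ := exists_strictMono_range_eq htype
  have hne : o.cof.ord ≠ 0 := by
    simp [Cardinal.ord_eq_zero, Ordinal.cof_eq_zero, ho]
  refine ⟨hne, f ∘ g, fun a => hf _, ?_⟩
  exact ht.comp (tendsto_atTop_of_unbounded_range hne g hmono.monotone
    (hrange ▸ fun a => let ⟨b, hb, hab⟩ := hub a; ⟨b, hb, not_lt.2 hab⟩))

end Aux

/-- Lemma 2.2: if `X` is radial at `x` and `x ∈ closure A`, there is a nonzero regular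
cardinal `κ ≤ |X|` and an injective transfinite sequence of length `κ` contained in `A`
converging strictly to `x`. -/
theorem stmt_0 {X : Type u} [TopologicalSpace X] (x : X) (hrad : RadialAt x)
    (A : Set X) (hA : x ∈ closure A) :
    ∃ κ : Cardinal.{u}, κ ≠ 0 ∧ κ.ord.cof = κ ∧ κ ≤ Cardinal.mk X ∧
      ∃ f : κ.ord.ToType → X, Function.Injective f ∧ (∀ a, f a ∈ A) ∧
        Filter.Tendsto f Filter.atTop (nhds x) ∧
        ∀ a : κ.ord.ToType, x ∉ closure (f '' {b | b < a}) := by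
  have hQA : {o : Ordinal.{u} | QQ x A o}.Nonempty := by
    obtain ⟨o, ho, hf⟩ := hrad A hA
    exact ⟨o, ho, hf⟩
  set o : Ordinal.{u} := sInf {o : Ordinal.{u} | QQ x A o} with ho_def
  have hQo : QQ x A o := csInf_mem hQA
  have hmin : ∀ l, QQ x A l → o ≤ l := fun l hl => csInf_le' hl
  have hcof : o.cof.ord = o := le_antisymm (Ordinal.ord_cof_le o) (hmin _ hQo.cof)
  have hcardcof : o.cof = o.card := by
    conv_rhs => rw [← hcof]
    rw [Cardinal.card_ord]
  have ho0 : o ≠ 0 := hQo.1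
  haveI : Nonempty o.ToType := Ordinal.nonempty_toType_iff.2 ho0
  -- smallness: x is not in the closure of any subset of A of size < o.card
  have hsmall : ∀ S : Set X, S ⊆ A → Cardinal.mk S < o.card → x ∉ closure S := by
    intro S hSA hScard hclos
    rcases lt_or_ge 1 o with h1o | h1o
    · -- pigeonhole case
      have hQS : {l : Ordinal.{u} | QQ x S l}.Nonempty := by
        obtain ⟨l, hl, hf⟩ := hrad S hclos
        exact ⟨l, hl, hf⟩
      set l : Ordinal.{u} := sInf {l : Ordinal.{u} | QQ x S l} with hl_def
      have hQl : QQ x S l := csInf_mem hQS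
      have hminS : ∀ l', QQ x S l' → l ≤ l' := fun l' hl' => csInf_le' hl'
      have hlcof : l.cof.ord = l := le_antisymm (Ordinal.ord_cof_le l) (hminS _ hQl.cof)
      have hol : o ≤ l := hmin l (hQl.mono hSA)
      obtain ⟨hl0, f, hfS, htend⟩ := hQl
      haveI : Nonempty l.ToType := Ordinal.nonempty_toType_iff.2 hl0
      have hub : Set.Unbounded ((· < ·) : l.ToType → l.ToType → Prop)
          (⋃ s : S, f ⁻¹' {(s : X)}) := by
        intro a
        exact ⟨a, Set.mem_iUnion.2 ⟨⟨f a, hfS a⟩, rfl⟩, lt_irrefl a⟩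
      have hcard2 : Cardinal.mk S <
          Order.cof l.ToType := by
        have h1 : Order.cof l.ToType
            = l.cof := by
          exact Ordinal.cof_toType l
        rw [h1]
        calc Cardinal.mk S < o.card := hScard
          _ ≤ l.card := Ordinal.card_le_card hol
          _ = l.cof := by conv_lhs => rw [← hlcof, Cardinal.card_ord]
      obtain ⟨s, hubs⟩ := isCofinal_of_isCofinal_iUnion
        (fun a => let ⟨b, hb, hab⟩ := hub a; ⟨b, hb, not_lt.1 hab⟩) hcard2
      have hsnbhd : ∀ U ∈ nhds x, (s : X) ∈ U := by
        intro U hU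
        have hev : f ⁻¹' U ∈ Filter.atTop := htend hU
        rw [Filter.mem_atTop_sets] at hev
        obtain ⟨a₀, ha₀⟩ := hev
        obtain ⟨c, hcfib, hc⟩ := hubs a₀
        have hcs : f c = (s : X) := hcfib
        have := ha₀ c hc
        rwa [Set.mem_preimage, hcs] at this
      have hQ1 : QQ x A 1 := by
        refine ⟨one_ne_zero, fun _ => (s : X), fun _ => hSA s.2, ?_⟩
        intro U hU
        have : (fun _ : (1 : Ordinal.{u}).ToType => (s : X)) ⁻¹' U = Set.univ :=
          Set.preimage_const_of_mem (hsnbhd U hU)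
        simp only [Filter.mem_map, this]
        exact Filter.univ_mem
      exact absurd (hmin 1 hQ1) (not_le.2 h1o)
    · -- o = 1 case: S is empty
      have ho1 : o = 1 := le_antisymm h1o (Ordinal.one_le_iff_ne_zero.2 ho0)
      rw [ho1, Ordinal.card_one, Cardinal.lt_one_iff_zero, Cardinal.mk_eq_zero_iff] at hScard
      have : S = ∅ := by
        ext y; exact ⟨fun hy => (hScard.false ⟨y, hy⟩).elim, fun hy => hy.elim⟩
      rw [this, closure_empty] at hclos
      exact hclos
  -- the sequence witnessing QQ x A o
  obtain ⟨-, f, hfA, htend⟩ := hQo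
  -- the set of "first occurrences" of values of f
  set T : Set o.ToType := {a | ∀ b, b < a → f b ≠ f a} with hT_def
  have hcard_lt : ∀ b : o.ToType, Cardinal.mk (f '' {c | c < b}) < o.card := by
    intro b
    have h1 : Cardinal.mk (f '' {c | c < b}) ≤ Cardinal.mk {c | c < b} :=
      Cardinal.mk_image_le
    have h2 : Cardinal.mk {c : o.ToType | c < b} =
        (Ordinal.typein ((· < ·) : o.ToType → o.ToType → Prop) b).card :=
      Ordinal.card_typein (r := ((· < ·) : o.ToType → o.ToType → Prop)) b
    have h3 : Ordinal.typein ((· < ·) : o.ToType → o.ToType → Prop) b < o := by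
      have := Ordinal.typein_lt_type ((· < ·) : o.ToType → o.ToType → Prop) b
      rwa [Ordinal.type_toType] at this
    have h4 : (Ordinal.typein ((· < ·) : o.ToType → o.ToType → Prop) b).card < o.card := by
      rw [← hcardcof]
      exact Cardinal.lt_ord.1 (by rwa [hcof])
    exact h1.trans_lt (h2 ▸ h4)
  have hTub : Set.Unbounded ((· < ·) : o.ToType → o.ToType → Prop) T := by
    by_contra hnub
    rw [Set.not_unbounded_iff] at hnub
    obtain ⟨b, hb⟩ := hnub
    -- every value of f occurs before b
    have hall : ∀ a, f a ∈ f '' {c | c < b} := by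
      intro a
      have wfmin := (@IsWellFounded.wf o.ToType (· < ·) _)
      set C : Set o.ToType := {c | f c = f a} with hC_def
      have haC : a ∈ C := rfl
      set a' := wfmin.min C ⟨a, haC⟩ with ha'_def
      have ha'C : a' ∈ C := wfmin.min_mem C ⟨a, haC⟩
      have ha'T : a' ∈ T := by
        intro c hc hfc
        have : c ∈ C := by rw [hC_def]; simp only [Set.mem_setOf_eq]; rw [hfc]; exact ha'C
        exact wfmin.not_lt_min C this hc
      exact ⟨a', hb a' ha'T, ha'C⟩
    have hclos : x ∈ closure (f '' {c | c < b}) :=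
      mem_closure_of_tendsto htend (Filter.Eventually.of_forall hall)
    exact hsmall _ (by rintro _ ⟨c, -, rfl⟩; exact hfA c) (hcard_lt b) hclos
  -- T is nonempty, get its order type
  have hTne : T.Nonempty := by
    obtain ⟨a, ha, -⟩ := hTub (Classical.arbitrary o.ToType)
    exact ⟨a, ha⟩
  set τ : Ordinal.{u} := Ordinal.type (Subrel ((· < ·) : o.ToType → o.ToType → Prop) (· ∈ T))
    with hτ_def
  have hτ0 : τ ≠ 0 := Ordinal.type_ne_zero_iff_nonempty.2 (Set.Nonempty.to_subtype hTne)
  have hτ_le : τ ≤ o := by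
    have := (Subrel.relEmbedding ((· < ·) : o.ToType → o.ToType → Prop) (· ∈ T)).ordinal_type_le
    rwa [Ordinal.type_toType] at this
  -- first extraction at length τ, to show o ≤ τ
  have hQτ : QQ x A τ := by
    obtain ⟨g, hgmono, hgrange⟩ := exists_strictMono_range_eq (l := τ) rfl
    exact ⟨hτ0, f ∘ g, fun a => hfA _,
      htend.comp (tendsto_atTop_of_unbounded_range hτ0 g hgmono.monotone (hgrange ▸ hTub))⟩
  have hτo : τ = o := le_antisymm hτ_le (hmin τ hQτ)
  -- second extraction, now directly at length o
  obtain ⟨g, hgmono, hgrange⟩ := exists_strictMono_range_eq (l := o) (hτ_def ▸ hτo)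
  have hκord : o.card.ord = o := by rw [← hcardcof, hcof]
  refine ⟨o.card, ?_, ?_, ?_, ?_⟩
  · simp [Ordinal.card_eq_zero, ho0]
  · rw [hκord, hcardcof]
  · rw [← Cardinal.mk_toType o]
    -- f ∘ g is injective
    refine Cardinal.mk_le_of_injective (f := f ∘ g) ?_
    have hlt : ∀ ξ η : o.ToType, ξ < η → f (g ξ) ≠ f (g η) := by
      intro ξ η hξη
      have hgη : g η ∈ T := hgrange ▸ Set.mem_range_self η
      exact hgη (g ξ) (hgmono hξη)
    intro ξ η h
    rcases lt_trichotomy ξ η with hlt' | heq | hlt'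
    · exact absurd h (hlt ξ η hlt')
    · exact heq
    · exact absurd h.symm (hlt η ξ hlt')
  · rw [hκord]
    have hlt : ∀ ξ η : o.ToType, ξ < η → f (g ξ) ≠ f (g η) := by
      intro ξ η hξη
      have hgη : g η ∈ T := hgrange ▸ Set.mem_range_self η
      exact hgη (g ξ) (hgmono hξη)
    refine ⟨f ∘ g, ?_, fun a => hfA _, ?_, ?_⟩
    · intro ξ η h
      rcases lt_trichotomy ξ η with hlt' | heq | hlt'
      · exact absurd h (hlt ξ η hlt')
      · exact heq
      · exact absurd h.symm (hlt η ξ hlt')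
    · exact htend.comp (tendsto_atTop_of_unbounded_range ho0 g hgmono.monotone
        (hgrange ▸ hTub))
    · intro a hclos
      refine hsmall ((f ∘ g) '' {b | b < a}) ?_ ?_ hclos
      · rintro _ ⟨c, -, rfl⟩; exact hfA _
      · have h1 : (f ∘ g) '' {b | b < a} ⊆ f '' {c | c < g a} := by
          rintro _ ⟨c, hc, rfl⟩
          exact ⟨g c, hgmono hc, rfl⟩
        exact (Cardinal.mk_le_mk_of_subset h1).trans_lt (hcard_lt (g a))
end

section
/- The Tychonoff plank X := (ω+1) × (ω₁+1), with each factor carrying its order topology and X the product topology, is not radial at the corner point (ω, ω₁): the set A := ω × ω₁ has (ω, ω₁) in its closure, but no transfinite sequence contained in A converges to (ω, ω₁). -/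
open Filter Topology Set

universe u v

section Aux

variable {P : Type u} [LinearOrder P] [TopologicalSpace P] [OrderTopology P]
  {c : Ordinal.{u}} (e : P ≃o Set.Iic c) {a : P}

lemma aux_top (ha : (e a : Ordinal) = c) (x : P) : x ≤ a := by
  have : (e x : Ordinal) ≤ (e a : Ordinal) := by rw [ha]; exact Set.mem_Iic.mp (e x).2
  exact e.le_iff_le.mp (Subtype.coe_le_coe.mp this)

lemma aux_lt_of_ne (ha : (e a : Ordinal) = c) {x : P} (hx : x ≠ a) : x < a :=
  lt_of_le_of_ne (aux_top e ha x) hx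

lemma aux_mem_closure (hc : Order.IsSuccLimit c) (ha : (e a : Ordinal) = c) :
    a ∈ closure {p : P | p ≠ a} := by
  have hlub : IsLUB (Set.Iio a) a := by
    constructor
    · exact fun x hx => le_of_lt hx
    · intro x hx
      by_contra h
      push_neg at h
      have hex : (e x : Ordinal) < c := by
        have := e.lt_iff_lt.mpr h
        have := Subtype.coe_lt_coe.mpr this
        rwa [ha] at this
      have hsucc : Order.succ (e x : Ordinal) < c := hc.succ_lt hex
      set d : P := e.symm ⟨Order.succ (e x : Ordinal), hsucc.le⟩ with hd
      have hda : d < a := by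
        refine e.lt_iff_lt.mp ?_
        rw [e.apply_symm_apply]
        refine Subtype.coe_lt_coe.mp ?_
        simpa [ha] using hsucc
      have hdx : d ≤ x := hx hda
      have : (e d : Ordinal) ≤ (e x : Ordinal) :=
        Subtype.coe_le_coe.mpr (e.le_iff_le.mpr hdx)
      rw [hd, e.apply_symm_apply] at this
      exact absurd this (Order.lt_succ (e x : Ordinal)).not_ge
  have hne : (Set.Iio a).Nonempty := by
    refine ⟨e.symm ⟨0, hc.pos.le⟩, ?_⟩
    refine e.lt_iff_lt.mp ?_
    rw [e.apply_symm_apply]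
    refine Subtype.coe_lt_coe.mp ?_
    simpa [ha] using hc.pos
  exact closure_mono (fun x hx => ne_of_lt hx) (hlub.mem_closure hne)

lemma aux_eventually (ha : (e a : Ordinal) = c)
    {ι : Type v} {l : Filter ι} {g : ι → P} (hg : Filter.Tendsto g l (𝓝 a))
    {β : Ordinal} (hβ : β < c) : ∀ᶠ i in l, β < (e (g i) : Ordinal) := by
  have hd : e.symm ⟨β, hβ.le⟩ < a := by
    refine e.lt_iff_lt.mp ?_
    rw [e.apply_symm_apply]
    refine Subtype.coe_lt_coe.mp ?_
    simpa [ha] using hβ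
  filter_upwards [hg (Ioi_mem_nhds hd)] with i hi
  have : (e (e.symm ⟨β, hβ.le⟩) : Ordinal) < (e (g i) : Ordinal) :=
    Subtype.coe_lt_coe.mpr (e.lt_iff_lt.mpr hi)
  rwa [e.apply_symm_apply] at this

end Aux

/-- The Tychonoff plank `(ω+1) × (ω₁+1)` is not radial at the corner `(ω, ω₁)`:
the set `A := ω × ω₁` has the corner in its closure, but no transfinite sequence
contained in `A` converges to the corner. Here the factors are represented by
linear orders order-isomorphic to `Iic ω` and `Iic ω₁`, each carrying its order
topology, and the product carries the product topology. -/
theorem stmt_3 {P : Type u} {Q : Type u}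
    [LinearOrder P] [TopologicalSpace P] [OrderTopology P]
    [LinearOrder Q] [TopologicalSpace Q] [OrderTopology Q]
    (eP : P ≃o Set.Iic Ordinal.omega0.{u})
    (eQ : Q ≃o Set.Iic (Cardinal.aleph.{u} 1).ord)
    (a : P) (b : Q)
    (ha : (eP a : Ordinal) = Ordinal.omega0)
    (hb : (eQ b : Ordinal) = (Cardinal.aleph 1).ord) :
    (a, b) ∈ closure {p : P × Q | p.1 ≠ a ∧ p.2 ≠ b} ∧
    ¬ ∃ o : Ordinal.{u}, o ≠ 0 ∧ ∃ f : o.ToType → P × Q,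
        (∀ i, f i ∈ {p : P × Q | p.1 ≠ a ∧ p.2 ≠ b}) ∧
        Filter.Tendsto f Filter.atTop (nhds (a, b)) := by
  have hω₁ : Order.IsSuccLimit ((Cardinal.aleph.{u} 1).ord) :=
    Cardinal.isSuccLimit_ord (Cardinal.aleph0_le_aleph 1)
  constructor
  · have hset : {p : P × Q | p.1 ≠ a ∧ p.2 ≠ b} = {p : P | p ≠ a} ×ˢ {q : Q | q ≠ b} := rfl
    rw [hset, closure_prod_eq]
    exact ⟨aux_mem_closure eP Ordinal.isSuccLimit_omega0 ha,
      aux_mem_closure eQ hω₁ hb⟩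
  · rintro ⟨o, ho, f, hfA, hf⟩
    haveI : Nonempty o.ToType := Ordinal.toType_nonempty_iff_ne_zero.mpr ho
    have hf1 : Filter.Tendsto (fun i => (f i).1) Filter.atTop (𝓝 a) :=
      (continuous_fst.tendsto _).comp hf
    have hf2 : Filter.Tendsto (fun i => (f i).2) Filter.atTop (𝓝 b) :=
      (continuous_snd.tendsto _).comp hf
    -- for each n : ℕ, a bound beyond which the first coordinate exceeds n
    have key : ∀ n : ℕ, ∃ j, ∀ i ≥ j, (n : Ordinal) < (eP (f i).1 : Ordinal) := fun n =>
      Filter.eventually_atTop.mp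
        (aux_eventually eP ha hf1 (Ordinal.nat_lt_omega0 n))
    choose j hj using key
    -- the j's are cofinal
    have hub : ∀ i, ∃ n : ℕ, i < j n := by
      intro i
      by_contra h
      push_neg at h
      have hlt : (eP (f i).1 : Ordinal) < Ordinal.omega0 := by
        have hne := (hfA i).1
        rcases (Set.mem_Iic.mp (eP (f i).1).2).lt_or_eq with h' | h'
        · exact h'
        · exact absurd (eP.injective (Subtype.ext (h'.trans ha.symm))) hne
      obtain ⟨n, hn⟩ := Ordinal.lt_omega0.mp hlt
      exact absurd hn (hj n i (h n)).ne'
    -- all second coordinates are below ω₁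
    have hQlt : ∀ i, (eQ (f i).2 : Ordinal) < (Cardinal.aleph 1).ord := by
      intro i
      rcases (Set.mem_Iic.mp (eQ (f i).2).2).lt_or_eq with h' | h'
      · exact h'
      · exact absurd (eQ.injective (Subtype.ext (h'.trans hb.symm))) (hfA i).2
    set β : Ordinal := ⨆ n : ℕ, Order.succ (eQ (f (j n)).2 : Ordinal) with hβdef
    have hβlt : β < (Cardinal.aleph 1).ord := by
      apply Cardinal.iSup_lt_ord_lift_of_isRegular Cardinal.isRegular_aleph_one
      · simpa using Cardinal.aleph0_lt_aleph_one
      · exact fun n => hω₁.succ_lt (hQlt (j n))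
    obtain ⟨jβ, hjβ⟩ := Filter.eventually_atTop.mp (aux_eventually eQ hb hf2 hβlt)
    obtain ⟨n, hn⟩ := hub jβ
    have h1 : β < (eQ (f (j n)).2 : Ordinal) := hjβ (j n) hn.le
    have h2 : Order.succ (eQ (f (j n)).2 : Ordinal) ≤ β :=
      le_ciSup (Ordinal.bddAbove_range _) n
    exact absurd (h1.trans_le ((Order.le_succ _).trans h2)) (lt_irrefl _)
end

section
/- Let X be a space, x ∈ X, and let (C_i)_{i∈I} be a nest system for x, i.e., a nonempty family of nests (sets of neighbourhoods of x linearly ordered by inclusion) such that the mesh M(C) := { ⋂_{i∈I} C_i : C_i ∈ C_i for each i } is a neighbourhood base at x. Then for all distinct i, j ∈ I, the intersection of the i-th spoke and the j-th spoke equals the neighbourhood core N_x of x, where the i-th spoke is S_i := ⋂_{j ≠ i} ⋂ C_j (interpreted as X when I = {i}) and N_x is the intersection of all neighbourhoods of x. -/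
open Filter Topology Set

universe u v

/-- A nest: a nonempty family of sets linearly ordered by inclusion. -/
def IsNest {X : Type u} (C : Set (Set X)) : Prop :=
  C.Nonempty ∧ IsChain (· ⊆ ·) C

/-- The `i`-th spoke of a family of nests: the intersection of all members of
all the other nests (the whole space when `I` is a singleton). -/
def Spoke {X : Type u} {I : Type v} (C : I → Set (Set X)) (i : I) : Set X :=
  ⋂ j ∈ ({i}ᶜ : Set I), ⋂₀ C j

/-- The neighbourhood core of `x`: the intersection of all neighbourhoods of `x`. -/
def NbhdCore {X : Type u} [TopologicalSpace X] (x : X) : Set X :=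
  ⋂₀ {U | U ∈ nhds x}

/-- A nest system for `x`: a nonempty family of nests of neighbourhoods of `x`
whose mesh `{ ⋂ i, f i : ∀ i, f i ∈ C i }` is a neighbourhood base at `x`. -/
def IsNestSystem {X : Type u} [TopologicalSpace X] {I : Type v} (x : X)
    (C : I → Set (Set X)) : Prop :=
  Nonempty I ∧
  (∀ i, IsNest (C i)) ∧
  (∀ i, ∀ s ∈ C i, s ∈ nhds x) ∧
  (∀ f : I → Set X, (∀ i, f i ∈ C i) → (⋂ i, f i) ∈ nhds x) ∧
  (∀ U ∈ nhds x, ∃ f : I → Set X, (∀ i, f i ∈ C i) ∧ (⋂ i, f i) ⊆ U)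

/-- An independent nest system: a nest system such that every mesh element is
the union of its intersections with the spokes. -/
def IsIndepNestSystem {X : Type u} [TopologicalSpace X] {I : Type v} (x : X)
    (C : I → Set (Set X)) : Prop :=
  IsNestSystem x C ∧
  ∀ f : I → Set X, (∀ i, f i ∈ C i) → (⋂ i, f i) = ⋃ i, (f i ∩ Spoke C i)

/-- Lemma 3.8: for a nest system, the intersection of two distinct spokes is the
neighbourhood core. -/
theorem stmt_5 {X : Type u} [TopologicalSpace X] {I : Type v} (x : X)
    (C : I → Set (Set X)) (h : IsNestSystem x C) :
    ∀ i j : I, i ≠ j → Spoke C i ∩ Spoke C j = NbhdCore x := by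
  obtain ⟨-, -, hmem, -, hbase⟩ := h
  intro i j hij
  ext y
  constructor
  · rintro ⟨hi, hj⟩ U hU
    obtain ⟨f, hf, hsub⟩ := hbase U hU
    apply hsub
    simp only [Set.mem_iInter]
    intro k
    by_cases hk : k = i
    · subst hk
      exact Set.mem_sInter.mp (Set.mem_iInter₂.mp hj k hij) _ (hf k)
    · exact Set.mem_sInter.mp (Set.mem_iInter₂.mp hi k hk) _ (hf k)
  · intro hy
    constructor <;>
    · refine Set.mem_iInter₂.mpr fun k _ => Set.mem_sInter.mpr fun s hs => ?_
      exact hy _ (hmem k s hs)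
end

section
/- If x is a point of a topological space X admitting an independent nest system, then X is radial at x. -/
open Filter Topology Set

universe u v

lemma chain_coinitial_seq {X : Type u} (D : Set (Set X)) (hne : D.Nonempty)
    (hch : IsChain (· ⊆ ·) D) :
    ∃ o : Ordinal.{u}, o ≠ 0 ∧ ∃ g : o.ToType → Set X,
      (∀ a, g a ∈ D) ∧ (∀ a b : o.ToType, a ≤ b → g b ⊆ g a) ∧
      (∀ c ∈ D, ∃ a, g a ⊆ c) := by
  classical
  letI r : D → D → Prop := WellOrderingRel
  haveI hwo : IsWellOrder D r := WellOrderingRel.isWellOrder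
  have wf : WellFounded r := hwo.wf
  set W : Set ↥D := {c : ↥D | ∀ d : ↥D, r d c → (c : Set X) ⊆ (d : Set X)} with hWdef
  have key : ∀ c : ↥D, ∃ w : ↥D, w ∈ W ∧ (w : Set X) ⊆ (c : Set X) := by
    intro c
    have hT : {d : ↥D | (d : Set X) ⊆ (c : Set X)}.Nonempty := ⟨c, show (c : Set X) ⊆ (c : Set X) from subset_rfl⟩
    refine ⟨wf.min _ hT, ?_, wf.min_mem _ hT⟩
    intro d hd
    by_contra hsub
    have hdw : (d : Set X) ⊆ (wf.min _ hT : Set X) := by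
      rcases eq_or_ne d (wf.min _ hT) with h | h
      · exact h ▸ subset_rfl
      · rcases hch d.2 (wf.min _ hT).2 (fun hdw => h (Subtype.ext hdw)) with h1 | h1
        · exact h1
        · exact absurd h1 hsub
    exact wf.not_lt_min _ (hdw.trans (wf.min_mem _ hT)) hd
  have hWne : Nonempty ↥W := by
    obtain ⟨c, hc⟩ := hne
    obtain ⟨w, hw, _⟩ := key ⟨c, hc⟩
    exact ⟨⟨w, hw⟩⟩
  set s : ↥W → ↥W → Prop := Subrel r (· ∈ W) with hs
  haveI : IsWellOrder ↥W s := inferInstance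
  refine ⟨Ordinal.type s, Ordinal.type_ne_zero_iff_nonempty.2 hWne, ?_⟩
  set G := (Ordinal.ToType.mk (o := Ordinal.type s)) with hG
  refine ⟨fun a => ((Ordinal.enum s ⟨(G.symm a).1, (G.symm a).2⟩ : ↥W) : ↥D), ?_, ?_, ?_⟩
  · intro a
    exact ((Ordinal.enum s ⟨(G.symm a).1, (G.symm a).2⟩ : ↥W) : ↥D).2
  · intro a b hab
    have hle : G.symm a ≤ G.symm b := G.symm.le_iff_le.mpr hab
    rcases eq_or_lt_of_le hle with heq | hlt
    · beta_reduce
      rw [heq]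
    · have hlt' : (⟨(G.symm a).1, (G.symm a).2⟩ : {p // p < Ordinal.type s}) <
          ⟨(G.symm b).1, (G.symm b).2⟩ := hlt
      have hrel : s (Ordinal.enum s ⟨(G.symm a).1, (G.symm a).2⟩)
          (Ordinal.enum s ⟨(G.symm b).1, (G.symm b).2⟩) :=
        Ordinal.enum_lt_enum.mpr hlt'
      exact (Ordinal.enum s ⟨(G.symm b).1, (G.symm b).2⟩).2 _ hrel
  · intro c hc
    obtain ⟨w, hwW, hwc⟩ := key ⟨c, hc⟩
    refine ⟨G ⟨Ordinal.typein s ⟨w, hwW⟩, Ordinal.typein_lt_type s _⟩, ?_⟩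
    have h1 : G.symm (G ⟨Ordinal.typein s ⟨w, hwW⟩, Ordinal.typein_lt_type s _⟩) =
        ⟨Ordinal.typein s ⟨w, hwW⟩, Ordinal.typein_lt_type s _⟩ := G.symm_apply_apply _
    beta_reduce
    rw [h1]
    have h2 : Ordinal.enum s ⟨Ordinal.typein s ⟨w, hwW⟩, Ordinal.typein_lt_type s _⟩
        = ⟨w, hwW⟩ := Ordinal.enum_typein s _
    rw [h2]
    exact hwc

/-- Theorem 3.9: if a point admits an independent nest system, then the space is
radial at that point. -/
theorem stmt_6 {X : Type u} [TopologicalSpace X] {I : Type v} (x : X)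
    (C : I → Set (Set X)) (h : IsIndepNestSystem x C) :
    RadialAt x := by
  classical
  obtain ⟨⟨hne, hnest, hnbhd, hmesh, hbase⟩, hindep⟩ := h
  intro A hA
  -- Step 1: some spoke has x in the closure of its intersection with A
  have hstep : ∃ i, x ∈ closure (A ∩ Spoke C i) := by
    by_contra hcon
    push_neg at hcon
    have hU : ∀ i, ∃ U ∈ nhds x, U ∩ (A ∩ Spoke C i) = ∅ := by
      intro i
      have := hcon i
      rw [mem_closure_iff_nhds] at this
      push_neg at this
      obtain ⟨U, hU1, hU2⟩ := this
      exact ⟨U, hU1, hU2⟩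
    choose U hUx hUe using hU
    choose F hF hFsub using fun i => hbase (U i) (hUx i)
    have hg : ∀ i, (fun i => F i i) i ∈ C i := fun i => hF i i
    have hmem : (⋂ i, F i i) ∈ nhds x := hmesh _ hg
    obtain ⟨y, hy1, hy2⟩ := mem_closure_iff_nhds.mp hA _ hmem
    rw [hindep _ hg] at hy1
    obtain ⟨T, ⟨i, rfl⟩, hyT⟩ := hy1
    have hyU : y ∈ U i := by
      apply hFsub i
      rw [hindep (F i) (hF i)]
      exact Set.mem_iUnion.mpr ⟨i, hyT⟩
    have : y ∈ U i ∩ (A ∩ Spoke C i) := ⟨hyU, hy2, hyT.2⟩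
    rw [hUe i] at this
    exact this
  obtain ⟨i, hi⟩ := hstep
  -- Step 2: get a coinitial decreasing ordinal-indexed sequence in the nest C i
  obtain ⟨o, ho, g, hgD, hganti, hgcof⟩ :=
    chain_coinitial_seq (C i) (hnest i).1 (hnest i).2
  haveI : Nonempty o.ToType := Ordinal.nonempty_toType_iff.mpr ho
  -- Step 3: pick points
  have hpt : ∀ a : o.ToType, ∃ y, y ∈ g a ∩ (A ∩ Spoke C i) := by
    intro a
    exact mem_closure_iff_nhds.mp hi (g a) (hnbhd i _ (hgD a))
  choose p hp using hpt
  refine ⟨o, ho, p, fun a => (hp a).2.1, ?_⟩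
  rw [tendsto_atTop']
  intro U hU
  obtain ⟨F, hF, hFsub⟩ := hbase U hU
  obtain ⟨a, ha⟩ := hgcof (F i) (hF i)
  refine ⟨a, fun b hb => ?_⟩
  apply hFsub
  rw [hindep F hF]
  refine Set.mem_iUnion.mpr ⟨i, ?_, (hp b).2.2⟩
  exact ha (hganti a b hb (hp b).1)
end

section
/- Being independently-based is a hereditary property: if x ∈ Y ⊆ X and x has an independent nest system with respect to X, then x has an independent nest system with respect to the subspace Y (obtained by intersecting each member of each nest with Y). -/
open Filter Topology Set

universe u v

/-- Lemma 3.3 / Corollary 3.4: being independently-based is hereditary. If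
`x ∈ Y ⊆ X` and `x` has an independent nest system in `X`, then the traces on `Y`
of its nests form an independent nest system for `x` in the subspace `Y`. -/
theorem stmt_7 {X : Type u} [TopologicalSpace X] {I : Type v} (Y : Set X) (x : X)
    (hx : x ∈ Y) (C : I → Set (Set X)) (h : IsIndepNestSystem x C) :
    IsIndepNestSystem (X := Y) ⟨x, hx⟩
      (fun i => (fun c => (Subtype.val ⁻¹' c : Set Y)) '' C i) := by
  obtain ⟨⟨hI, hnest, hnhds, hmesh, hbase⟩, hindep⟩ := h
  have hspoke : ∀ i, Spoke (fun i => (fun c => (Subtype.val ⁻¹' c : Set Y)) '' C i) i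
      = Subtype.val ⁻¹' Spoke C i := by
    intro i
    simp only [Spoke, preimage_iInter, preimage_iInter₂, sInter_image, preimage_sInter]
  have hn : nhds (⟨x, hx⟩ : Y) = Filter.comap Subtype.val (nhds x) := nhds_subtype Y ⟨x, hx⟩
  refine ⟨⟨hI, ?_, ?_, ?_, ?_⟩, ?_⟩
  · intro i
    obtain ⟨hne, hch⟩ := hnest i
    exact ⟨hne.image _, hch.image_of_map_rel _ _ _ (fun a b hab => preimage_mono hab)⟩
  · rintro i s ⟨c, hc, rfl⟩
    rw [hn, mem_comap]
    exact ⟨c, hnhds i c hc, subset_rfl⟩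
  · intro g hg
    choose f hf hfg using hg
    rw [hn, mem_comap]
    refine ⟨⋂ i, f i, hmesh f hf, ?_⟩
    rw [preimage_iInter]
    exact iInter_mono (fun i => (hfg i).subset)
  · intro U hU
    rw [hn, mem_comap] at hU
    obtain ⟨V, hV, hVU⟩ := hU
    obtain ⟨f, hf, hfV⟩ := hbase V hV
    refine ⟨fun i => Subtype.val ⁻¹' f i, fun i => ⟨f i, hf i, rfl⟩, ?_⟩
    rw [← preimage_iInter]
    exact (preimage_mono hfV).trans hVU
  · intro g hg
    choose f hf hfg using hg
    have hgf : g = fun i => Subtype.val ⁻¹' f i := by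
      ext1 i; exact (hfg i).symm
    subst hgf
    rw [← preimage_iInter, hindep f hf, preimage_iUnion]
    refine iUnion_congr fun i => ?_
    rw [preimage_inter, hspoke i]
end

section
/- Every linearly ordered topological space (a linear order with its order topology) is independently-based: each point x admits an independent nest system, which when the order is unbounded above and below is given by the two nests C_0 := {(y,∞) : y < x} and C_1 := {(-∞,z) : z > x}. -/
open Filter Topology Set

universe u v

/-- Theorem 3.6: every linearly ordered topological space is independently-based:
each point admits an independent nest system. -/
theorem stmt_8 {X : Type u} [LinearOrder X] [TopologicalSpace X] [OrderTopology X]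
    (x : X) :
    ∃ (I : Type u) (C : I → Set (Set X)), IsIndepNestSystem x C := by
  classical
  set L : Set (Set X) := {s | s = Set.univ ∨ ∃ y, y < x ∧ s = Set.Ioi y} with hLdef
  set R : Set (Set X) := {s | s = Set.univ ∨ ∃ z, x < z ∧ s = Set.Iio z} with hRdef
  set C : ULift.{u} Bool → Set (Set X) := fun i => if i.down then R else L with hCdef
  -- basic facts
  have hCfalse : C ⟨false⟩ = L := by simp [hCdef]
  have hCtrue : C ⟨true⟩ = R := by simp [hCdef]
  have hmemL : ∀ s ∈ L, s ∈ nhds x := by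
    rintro s (rfl | ⟨y, hy, rfl⟩)
    · exact Filter.univ_mem
    · exact Ioi_mem_nhds hy
  have hmemR : ∀ s ∈ R, s ∈ nhds x := by
    rintro s (rfl | ⟨z, hz, rfl⟩)
    · exact Filter.univ_mem
    · exact Iio_mem_nhds hz
  have hnestL : IsNest L := by
    refine ⟨⟨Set.univ, Or.inl rfl⟩, ?_⟩
    rintro s (rfl | ⟨y₁, hy₁, rfl⟩) t (rfl | ⟨y₂, hy₂, rfl⟩) hne
    · exact absurd rfl hne
    · exact Or.inr (Set.subset_univ _)
    · exact Or.inl (Set.subset_univ _)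
    · rcases le_total y₁ y₂ with h | h
      · exact Or.inr (Set.Ioi_subset_Ioi h)
      · exact Or.inl (Set.Ioi_subset_Ioi h)
  have hnestR : IsNest R := by
    refine ⟨⟨Set.univ, Or.inl rfl⟩, ?_⟩
    rintro s (rfl | ⟨z₁, hz₁, rfl⟩) t (rfl | ⟨z₂, hz₂, rfl⟩) hne
    · exact absurd rfl hne
    · exact Or.inr (Set.subset_univ _)
    · exact Or.inl (Set.subset_univ _)
    · rcases le_total z₁ z₂ with h | h
      · exact Or.inl (Set.Iio_subset_Iio h)
      · exact Or.inr (Set.Iio_subset_Iio h)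
  -- left/right extraction lemmas
  have hLbase : ∀ s, s ∈ (⨅ b ∈ Set.Iio x, Filter.principal (Set.Ioi b)) →
      ∃ a ∈ L, a ⊆ s := by
    intro s hs
    rcases Set.eq_empty_or_nonempty (Set.Iio x) with he | hne
    · rw [he] at hs
      simp only [Set.mem_empty_iff_false, iInf_false, iInf_top, Filter.mem_top] at hs
      exact ⟨Set.univ, Or.inl rfl, hs ▸ subset_rfl⟩
    · have hd : DirectedOn ((fun b => Filter.principal (Set.Ioi b)) ⁻¹'o (· ≥ ·))
          (Set.Iio x) := by
        intro b₁ hb₁ b₂ hb₂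
        refine ⟨max b₁ b₂, max_lt hb₁ hb₂, ?_, ?_⟩
        · exact Filter.principal_mono.2 (Set.Ioi_subset_Ioi (le_max_left _ _))
        · exact Filter.principal_mono.2 (Set.Ioi_subset_Ioi (le_max_right _ _))
      obtain ⟨b, hb, hbs⟩ := (Filter.mem_biInf_of_directed hd hne).1 hs
      exact ⟨Set.Ioi b, Or.inr ⟨b, hb, rfl⟩, Filter.mem_principal.1 hbs⟩
  have hRbase : ∀ s, s ∈ (⨅ b ∈ Set.Ioi x, Filter.principal (Set.Iio b)) →
      ∃ a ∈ R, a ⊆ s := by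
    intro s hs
    rcases Set.eq_empty_or_nonempty (Set.Ioi x) with he | hne
    · rw [he] at hs
      simp only [Set.mem_empty_iff_false, iInf_false, iInf_top, Filter.mem_top] at hs
      exact ⟨Set.univ, Or.inl rfl, hs ▸ subset_rfl⟩
    · have hd : DirectedOn ((fun b => Filter.principal (Set.Iio b)) ⁻¹'o (· ≥ ·))
          (Set.Ioi x) := by
        intro b₁ hb₁ b₂ hb₂
        refine ⟨min b₁ b₂, lt_min hb₁ hb₂, ?_, ?_⟩
        · exact Filter.principal_mono.2 (Set.Iio_subset_Iio (min_le_left _ _))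
        · exact Filter.principal_mono.2 (Set.Iio_subset_Iio (min_le_right _ _))
      obtain ⟨b, hb, hbs⟩ := (Filter.mem_biInf_of_directed hd hne).1 hs
      exact ⟨Set.Iio b, Or.inr ⟨b, hb, rfl⟩, Filter.mem_principal.1 hbs⟩
  refine ⟨ULift.{u} Bool, C, ⟨⟨⟨⟨false⟩⟩, ?_, ?_, ?_, ?_⟩, ?_⟩⟩
  · -- each C i is a nest
    rintro ⟨b⟩
    cases b
    · rw [hCfalse]; exact hnestL
    · rw [hCtrue]; exact hnestR
  · -- members are neighbourhoods
    rintro ⟨b⟩ s hs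
    cases b
    · exact hmemL s (hCfalse ▸ hs)
    · exact hmemR s (hCtrue ▸ hs)
  · -- mesh elements are neighbourhoods
    intro f hf
    refine Filter.iInter_mem.2 ?_
    rintro ⟨b⟩
    cases b
    · exact hmemL _ (hCfalse ▸ hf ⟨false⟩)
    · exact hmemR _ (hCtrue ▸ hf ⟨true⟩)
  · -- mesh is a base
    intro U hU
    rw [nhds_eq_order x] at hU
    obtain ⟨t₁, ht₁, t₂, ht₂, hUeq⟩ := Filter.mem_inf_iff.1 hU
    obtain ⟨a, haL, has⟩ := hLbase t₁ ht₁
    obtain ⟨b, hbR, hbs⟩ := hRbase t₂ ht₂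
    refine ⟨fun i => if i.down then b else a, ?_, ?_⟩
    · rintro ⟨c⟩
      cases c
      · simpa [hCfalse] using haL
      · simpa [hCtrue] using hbR
    · intro w hw
      have hwa : w ∈ a := by simpa using Set.mem_iInter.1 hw ⟨false⟩
      have hwb : w ∈ b := by simpa using Set.mem_iInter.1 hw ⟨true⟩
      rw [hUeq]
      exact ⟨has hwa, hbs hwb⟩
  · -- independence
    intro f hf
    have hspoke : ∀ i w, w ∈ Spoke C i ↔ ∀ j, j ≠ i → ∀ s ∈ C j, w ∈ s := by
      intro i w
      simp [Spoke, Set.mem_iInter, Set.mem_sInter]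
    apply Set.Subset.antisymm
    · intro w hw
      have hwf : ∀ i, w ∈ f i := Set.mem_iInter.1 hw
      rcases le_total w x with hwx | hxw
      · -- w is in every member of R, hence in Spoke C ⟨false⟩
        refine Set.mem_iUnion.2 ⟨⟨false⟩, hwf ⟨false⟩, (hspoke _ _).2 ?_⟩
        rintro ⟨c⟩ hj s hs
        cases c
        · exact absurd rfl hj
        · rcases hCtrue ▸ hs with rfl | ⟨z, hz, rfl⟩
          · trivial
          · exact lt_of_le_of_lt hwx hz
      · refine Set.mem_iUnion.2 ⟨⟨true⟩, hwf ⟨true⟩, (hspoke _ _).2 ?_⟩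
        rintro ⟨c⟩ hj s hs
        cases c
        · rcases hCfalse ▸ hs with rfl | ⟨y, hy, rfl⟩
          · trivial
          · exact lt_of_lt_of_le hy hxw
        · exact absurd rfl hj
    · intro w hw
      obtain ⟨i, hwi, hws⟩ := Set.mem_iUnion.1 hw
      refine Set.mem_iInter.2 fun j => ?_
      by_cases hji : j = i
      · exact hji ▸ hwi
      · exact (hspoke i w).1 hws j hji _ (hf j)
end

section
/- Every GO-space (a subspace of a linearly ordered topological space) is radial. -/
open Filter Topology Set

universe u v

open Classical in
/-- Transfinite recursion: at each stage pick an element of `A` whose `e`-image is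
strictly above all previously chosen values (if possible). -/
noncomputable def radSeq {X : Type u} {L : Type v} [LinearOrder L]
    (e : X → L) (A : Set X) (x₀ : X) : Ordinal.{u} → X :=
  Ordinal.lt_wf.fix fun α ih =>
    if h : ∃ a ∈ A, ∀ β (hβ : β < α), e (ih β hβ) < e a then h.choose else x₀

open Classical in
theorem radSeq_def {X : Type u} {L : Type v} [LinearOrder L]
    (e : X → L) (A : Set X) (x₀ : X) (α : Ordinal.{u}) :
    radSeq e A x₀ α =
      if h : ∃ a ∈ A, ∀ β < α, e (radSeq e A x₀ β) < e a then h.choose else x₀ := by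
  unfold radSeq
  rw [Ordinal.lt_wf.fix_eq]

theorem rad_key {X : Type u} [TopologicalSpace X] {L : Type v} [LinearOrder L]
    [TopologicalSpace L] [OrderTopology L] {e : X → L} (he : Topology.IsEmbedding e)
    {x : X} {A : Set X} (hA : ∀ a ∈ A, e a < e x) (hx : e x ∈ closure (e '' A)) :
    ∃ o : Ordinal.{u}, o ≠ 0 ∧ ∃ f : o.ToType → X,
      (∀ a, f a ∈ A) ∧ Filter.Tendsto f Filter.atTop (nhds x) := by
  have hAne : A.Nonempty := by
    rcases A.eq_empty_or_nonempty with h | h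
    · simp [h] at hx
    · exact h
  obtain ⟨x₀, hx₀⟩ := hAne
  set s : Ordinal.{u} → X := radSeq e A x₀ with hs
  set Good : Ordinal.{u} → Prop := fun α => ∃ a ∈ A, ∀ β < α, e (s β) < e a with hG
  have hchoose : ∀ α (h : Good α), s α = h.choose := by
    intro α h
    show radSeq e A x₀ α = h.choose
    rw [radSeq_def]
    exact dif_pos h
  have hmemA : ∀ α, Good α → s α ∈ A := fun α h => (hchoose α h) ▸ h.choose_spec.1
  have hlt : ∀ α, Good α → ∀ β < α, e (s β) < e (s α) := fun α h =>
    (hchoose α h) ▸ h.choose_spec.2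
  have hstop : ∃ α, ¬ Good α := by
    by_contra h
    push_neg at h
    have hinj : Function.Injective s := by
      intro a b hab
      rcases lt_trichotomy a b with hlt' | h' | hlt'
      · exact absurd (hab ▸ hlt b (h b) a hlt') (lt_irrefl _)
      · exact h'
      · exact absurd (hab ▸ hlt a (h a) b hlt') (lt_irrefl _)
    exact not_injective_of_ordinal s hinj
  set o : Ordinal.{u} := Ordinal.lt_wf.min {α | ¬ Good α} hstop with ho
  have hno : ¬ Good o := Ordinal.lt_wf.min_mem _ hstop
  have hgood : ∀ β < o, Good β := by
    intro β hβ
    by_contra h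
    exact Ordinal.lt_wf.not_lt_min {α | ¬ Good α} h hβ
  have hone : o ≠ 0 := by
    intro h0
    exact hno ⟨x₀, hx₀, by rw [h0]; intro β hβ; exact absurd hβ (not_lt_of_ge (zero_le (a := β)))⟩
  have hmono : ∀ β γ, β ≤ γ → γ < o → e (s β) ≤ e (s γ) := by
    intro β γ hβγ hγ
    rcases eq_or_lt_of_le hβγ with rfl | h'
    · exact le_rfl
    · exact (hlt γ (hgood γ hγ) β h').le
  refine ⟨o, hone, fun i => s ((Ordinal.ToType.mk (o := o)).symm i : Iio o), fun i =>
    hmemA _ (hgood _ ((Ordinal.ToType.mk (o := o)).symm i).2), ?_⟩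
  have : Nonempty o.ToType := Ordinal.toType_nonempty_iff_ne_zero.mpr hone
  rw [he.toIsInducing.tendsto_nhds_iff]
  have hW : Tendsto (e ∘ fun i => s ((Ordinal.ToType.mk (o := o)).symm i : Iio o)) atTop
      (𝓝[<] (e x)) := by
    rw [(nhdsLT_basis_of_exists_lt ⟨e x₀, hA x₀ hx₀⟩).tendsto_right_iff]
    intro a ha
  -- find t ∈ A with a < e t
    obtain ⟨y, hy1, t, htA, rfl⟩ := mem_closure_iff_nhds.mp hx (Ioi a) (isOpen_Ioi.mem_nhds ha)
    -- from ¬ Good o, some stage beats t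
    have : ¬ ∀ β < o, e (s β) < e t := fun h => hno ⟨t, htA, h⟩
    push_neg at this
    obtain ⟨β, hβo, hβ⟩ := this
    refine Filter.eventually_atTop.mpr ⟨(Ordinal.ToType.mk (o := o)) ⟨β, hβo⟩, fun i hi => ?_⟩
    have hσ : (β : Ordinal) ≤ ((Ordinal.ToType.mk (o := o)).symm i : Iio o) := by
      have := (Ordinal.ToType.mk (o := o)).symm.monotone hi
      rwa [OrderIso.symm_apply_apply] at this
    constructor
    · exact lt_of_lt_of_le hy1 (le_trans hβ (hmono β _ hσ ((Ordinal.ToType.mk (o := o)).symm i).2))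
    · exact hA _ (hmemA _ (hgood _ ((Ordinal.ToType.mk (o := o)).symm i).2))
  exact hW.mono_right nhdsWithin_le_nhds


/-- Corollary 3.7 + Theorem 3.9: every GO-space (a space embedding in a linearly
ordered topological space) is radial. -/
theorem stmt_10 {X : Type u} [TopologicalSpace X] {L : Type v} [LinearOrder L]
    [TopologicalSpace L] [OrderTopology L] (e : X → L)
    (he : Topology.IsEmbedding e) :
    ∀ x : X, RadialAt x := by
  intro x A hxA
  by_cases hmem : x ∈ A
  · exact ⟨1, one_ne_zero, fun _ => x, fun _ => hmem, tendsto_const_nhds⟩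
  · have hcl : e x ∈ closure (e '' A) := by
      rw [he.closure_eq_preimage_closure_image] at hxA
      exact hxA
    have hsplit : e '' A ⊆ e '' {a ∈ A | e a < e x} ∪ e '' {a ∈ A | e x < e a} := by
      rintro y ⟨a, ha, rfl⟩
      rcases lt_trichotomy (e a) (e x) with h | h | h
      · exact Or.inl ⟨a, ⟨ha, h⟩, rfl⟩
      · exact absurd (he.injective h ▸ ha) hmem
      · exact Or.inr ⟨a, ⟨ha, h⟩, rfl⟩
    have := closure_mono hsplit hcl
    rw [closure_union] at this
    rcases this with h | h
    · obtain ⟨o, ho, f, hf, hft⟩ := rad_key he (fun a ha => ha.2) h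
      exact ⟨o, ho, f, fun i => (hf i).1, hft⟩
    · have he' : Topology.IsEmbedding (fun y => OrderDual.toDual (e y)) := he
      obtain ⟨o, ho, f, hf, hft⟩ := rad_key (L := Lᵒᵈ) he'
        (A := {a ∈ A | e x < e a}) (x := x) (fun a ha => ha.2) h
      exact ⟨o, ho, f, fun i => (hf i).1, hft⟩
end

section
/- Let X be a space and x ∈ X. If x admits a spoke system, i.e., a nonempty family (S_i)_{i∈I} of subspaces each containing the neighbourhood core N_x, each well-based at x in the subspace topology, and such that { ⋃_{i∈I} U_i : U_i a neighbourhood of x in S_i } is a neighbourhood base at x in X, then X is radial at x. -/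
open Filter Topology Set

universe u v

/-- A set `U ⊆ S` is a neighbourhood of `x` in the subspace `S` iff `U ∈ 𝓝[S] x`.
`S` is well-based at `x` if `x` has a neighbourhood base in the subspace `S`
well-ordered by reverse inclusion. -/
def WellBasedWithin {X : Type u} [TopologicalSpace X] (x : X) (S : Set X) : Prop :=
  ∃ B : Set (Set X),
    (∀ b ∈ B, b ⊆ S ∧ b ∈ nhdsWithin x S) ∧
    (∀ U, U ⊆ S → U ∈ nhdsWithin x S → ∃ b ∈ B, b ⊆ U) ∧
    IsChain (· ⊆ ·) B ∧ B.WellFoundedOn (fun a b => b ⊂ a)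

/-- A spoke system for `x`: a nonempty family of subspaces, each containing the
neighbourhood core and well-based at `x`, such that the unions of subspace
neighbourhoods of `x` form a neighbourhood base at `x`. -/
def IsSpokeSystem {X : Type u} [TopologicalSpace X] {I : Type v} (x : X)
    (S : I → Set X) : Prop :=
  Nonempty I ∧
  (∀ i, NbhdCore x ⊆ S i) ∧
  (∀ i, x ∈ S i) ∧
  (∀ i, WellBasedWithin x (S i)) ∧
  (∀ U : I → Set X, (∀ i, U i ⊆ S i ∧ U i ∈ nhdsWithin x (S i)) →
    (⋃ i, U i) ∈ nhds x) ∧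
  (∀ V ∈ nhds x, ∃ U : I → Set X,
    (∀ i, U i ⊆ S i ∧ U i ∈ nhdsWithin x (S i)) ∧ (⋃ i, U i) ⊆ V)

/-- An independent spoke system: distinct spokes meet exactly in the
neighbourhood core. -/
def IsIndepSpokeSystem {X : Type u} [TopologicalSpace X] {I : Type v} (x : X)
    (S : I → Set X) : Prop :=
  IsSpokeSystem x S ∧ ∀ i j : I, i ≠ j → S i ∩ S j = NbhdCore x

/-- `X` is strongly Fréchet at `x`. -/
def StronglyFrechetAt {X : Type u} [TopologicalSpace X] (x : X) : Prop :=
  ∀ A : ℕ → Set X, Antitone A → (∀ n, x ∈ closure (A n)) →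
    ∃ u : ℕ → X, (∀ n, u n ∈ A n) ∧ Filter.Tendsto u Filter.atTop (nhds x)

/-- `X` is first-countable at `x`: `x` has a countable neighbourhood base. -/
def FirstCountableAt {X : Type u} [TopologicalSpace X] (x : X) : Prop :=
  ∃ B : Set (Set X), B.Countable ∧ (∀ b ∈ B, b ∈ nhds x) ∧
    ∀ U ∈ nhds x, ∃ b ∈ B, b ⊆ U

/-- If `x` admits a spoke system, then `X` is radial at `x`. -/
theorem stmt_11 {X : Type u} [TopologicalSpace X] {I : Type v} (x : X)
    (S : I → Set X) (h : IsSpokeSystem x S) : RadialAt x := by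
  intro A hA
  obtain ⟨hI, hcore, hmem, hwb, hbase, hgen⟩ := h
  have key : ∃ i, ∀ U, U ⊆ S i → U ∈ nhdsWithin x (S i) → (U ∩ A).Nonempty := by
    by_contra hc
    push_neg at hc
    choose U hU1 hU2 hU3 using hc
    have hUn : (⋃ i, U i) ∈ nhds x := hbase U (fun i => ⟨hU1 i, hU2 i⟩)
    obtain ⟨y, hy1, hy2⟩ := (mem_closure_iff_nhds.mp hA _ hUn)
    obtain ⟨i, hyi⟩ := mem_iUnion.mp hy1
    exact absurd (hU3 i) (Set.nonempty_iff_ne_empty.mp ⟨y, hyi, hy2⟩)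
  obtain ⟨i, hi⟩ := key
  obtain ⟨B, hB1, hB2, hchain, hwf⟩ := hwb i
  obtain ⟨b0, hb0B, -⟩ := hB2 (S i) subset_rfl self_mem_nhdsWithin
  have hpt : ∀ b ∈ B, (b ∩ A).Nonempty := fun b hb => hi b (hB1 b hb).1 (hB1 b hb).2
  haveI : Nonempty X := ⟨x⟩
  choose! p hp using hpt
  let r : ↥B → ↥B → Prop := fun a b => (b : Set X) ⊂ (a : Set X)
  haveI : IsTrans ↥B r := ⟨fun _ _ _ hab hbc => hbc.trans hab⟩
  haveI : IsTrichotomous ↥B r := ⟨fun a b h1 h2 => by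
    rcases eq_or_ne a b with rfl | hne
    · exact rfl
    · have hne' : (a : Set X) ≠ (b : Set X) := fun hh => hne (Subtype.ext hh)
      rcases hchain a.2 b.2 hne' with hab | hba
      · exact absurd (HasSubset.Subset.ssubset_of_ne hab hne') h2
      · exact absurd (HasSubset.Subset.ssubset_of_ne hba hne'.symm) h1⟩
  haveI : IsWellFounded ↥B r := ⟨hwf⟩
  haveI : IsWellOrder ↥B r := ⟨⟩
  refine ⟨Ordinal.type r, Ordinal.type_ne_zero_iff_nonempty.mpr ⟨⟨b0, hb0B⟩⟩, ?_⟩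
  haveI hne : Nonempty (Ordinal.type r).ToType :=
    Ordinal.toType_nonempty_iff_ne_zero.mpr (Ordinal.type_ne_zero_iff_nonempty.mpr ⟨⟨b0, hb0B⟩⟩)
  haveI : IsWellOrder (Ordinal.type r).ToType (· < ·) := isWellOrder_lt
  obtain ⟨e⟩ := Ordinal.type_eq.mp (Ordinal.type_toType (Ordinal.type r))
  refine ⟨fun a => p ((e a : ↥B) : Set X), fun a => (hp _ (e a).2).2, ?_⟩
  rw [Filter.tendsto_atTop']
  intro V hV
  have hVS : V ∩ S i ∈ nhdsWithin x (S i) :=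
    Filter.inter_mem (mem_nhdsWithin_of_mem_nhds hV) self_mem_nhdsWithin
  obtain ⟨b, hbB, hbV⟩ := hB2 (V ∩ S i) inter_subset_right hVS
  refine ⟨e.symm ⟨b, hbB⟩, fun c hc => ?_⟩
  rcases eq_or_lt_of_le hc with rfl | hlt
  · have : p b ∈ b := by
      have := (hp b hbB).1
      simpa using this
    have hfc : (e (e.symm ⟨b, hbB⟩) : ↥B) = ⟨b, hbB⟩ := e.apply_symm_apply _
    rw [hfc]
    exact (hbV ((hp b hbB).1)).1
  · have hrel : r (e (e.symm ⟨b, hbB⟩)) (e c) := e.map_rel_iff.mpr hlt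
    rw [e.apply_symm_apply] at hrel
    have hsub : ((e c : ↥B) : Set X) ⊆ b := hrel.subset
    exact (hbV (hsub ((hp _ (e c).2).1))).1
end

section
/- Let X be a space radial at x. Then x admits a spoke system (S_i)_{i∈I} (each S_i containing N_x, well-based at x, and unions of S_i-neighbourhoods of x forming a neighbourhood base at x in X) such that additionally, for all distinct i, j ∈ I, x is not in the closure of (S_i ∩ S_j) ∖ N_x. -/
open Filter Topology Set

universe u v

open Ordinal

section Aux

variable {X : Type u} [TopologicalSpace X] {x : X}

lemma mem_nbhdCore_aux : x ∈ NbhdCore x := fun _ hW => mem_of_mem_nhds hW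

lemma nbhdCore_subset_aux {W : Set X} (hW : W ∈ nhds x) : NbhdCore x ⊆ W :=
  sInter_subset_of_mem hW

/-- nets into a set converging to x -/
def NetInto {X : Type u} [TopologicalSpace X] (x : X) (B : Set X) (o : Ordinal.{u}) : Prop :=
  o ≠ 0 ∧ ∃ f : o.ToType → X, (∀ a, f a ∈ B) ∧ Filter.Tendsto f Filter.atTop (nhds x)

lemma shorten_net {B : Set X} {o : Ordinal.{u}}
    (f : o.ToType → X) (hfB : ∀ a, f a ∈ B) (hf : Tendsto f atTop (nhds x))
    (hlt : o.cof.ord < o) :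
    NetInto x B o.cof.ord := by
  obtain ⟨g, hg⟩ := Ordinal.exists_fundamental_sequence o
  have hν : o.cof.ord = o.cof.ord := rfl
  have hν0 : o.cof.ord ≠ 0 := fun h0 => by
    have : o = 0 := Ordinal.cof_eq_zero.1 (Cardinal.ord_eq_zero.1 h0)
    exact absurd (this ▸ hlt) (by simp [this, h0])
  refine ⟨hν0, ?_⟩
  set eν := Ordinal.ToType.mk (o := o.cof.ord) with heν
  set eo := Ordinal.ToType.mk (o := o) with heo
  let j : o.cof.ord.ToType → o.ToType := fun b =>
    eo ⟨g (eν.symm b).1 (Set.mem_Iio.1 (eν.symm b).2),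
      Set.mem_Iio.2 (hg.lt _)⟩
  have hjmono : Monotone j := by
    intro b b' hbb
    have h1 : ((eν.symm b : Iio o.cof.ord) : Ordinal) ≤ (eν.symm b' : Iio o.cof.ord) := eν.symm.monotone hbb
    exact eo.monotone (Subtype.mk_le_mk.2 (hg.monotone _ _ h1))
  have hjunb : ∀ b : o.ToType, ∃ a, b ≤ j a := by
    intro b
    have hb : ((eo.symm b : Iio o) : Ordinal) < o := (eo.symm b).2
    obtain ⟨i, hi, hib⟩ := Ordinal.lt_blsub_iff.1 (lt_of_lt_of_eq hb hg.blsub_eq.symm)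
    refine ⟨eν ⟨i, hi⟩, ?_⟩
    have key : ((eo.symm b : Iio o) : Ordinal) ≤ (eo.symm (j (eν ⟨i, hi⟩)) : Iio o) := by
      have h2 : eo.symm (j (eν ⟨i, hi⟩)) =
          ⟨g (eν.symm (eν ⟨i, hi⟩)).1 (Set.mem_Iio.1 (eν.symm (eν ⟨i, hi⟩)).2),
            Set.mem_Iio.2 (hg.lt (Set.mem_Iio.1 (eν.symm (eν ⟨i, hi⟩)).2))⟩ :=
        eo.symm_apply_apply _
      rw [h2]
      have h3 : ((eν.symm (eν ⟨i, hi⟩) : Iio o.cof.ord) : Ordinal) = i := by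
        rw [eν.symm_apply_apply]
      exact hib.trans (hg.monotone hi _ h3.ge)
    exact eo.symm.le_iff_le.1 (Subtype.coe_le_coe.1 key)
  exact ⟨f ∘ j, fun a => hfB _, hf.comp (tendsto_atTop_atTop_of_monotone hjmono hjunb)⟩

end Aux

section Aux2
variable {X : Type u} [TopologicalSpace X] {x : X}

lemma regular_of_min {B : Set X} {κ : Ordinal.{u}} (hκ : NetInto x B κ)
    (hmin : ∀ o, NetInto x B o → κ ≤ o) : κ.cof.ord = κ := by
  rcases (Ordinal.ord_cof_le κ).lt_or_eq with hlt | he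
  · obtain ⟨hκ0, f, hfB, hft⟩ := hκ
    exact absurd (hmin _ (shorten_net f hfB hft hlt)) hlt.not_ge
  · exact he

lemma const_mem_core {o : Ordinal.{u}} (ho : o ≠ 0) (g : o.ToType → X)
    (hg : Tendsto g atTop (nhds x)) {d : X}
    (hd : ∀ a : o.ToType, ∃ b, a ≤ b ∧ g b = d) : d ∈ NbhdCore x := by
  haveI : Nonempty o.ToType := Ordinal.nonempty_toType_iff.2 ho
  intro W hW
  have hW' : W ∈ nhds x := hW
  have hpre : g ⁻¹' W ∈ (atTop : Filter o.ToType) := hg hW'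
  obtain ⟨a, ha⟩ := Filter.mem_atTop_sets.1 hpre
  obtain ⟨b, hab, hbd⟩ := hd a
  exact hbd ▸ ha b hab

lemma not_closure_small (h' : ∀ A : Set X, x ∈ closure A → ∃ o : Ordinal.{u}, NetInto x A o)
    {A : Set X} (hAN : ∀ a ∈ A, a ∉ NbhdCore x)
    {κ : Ordinal.{u}} (hmin : ∀ o, NetInto x A o → κ ≤ o)
    {s : Set X} (hs : s ⊆ A) (hcard : Cardinal.mk ↥s < κ.card) : x ∉ closure s := by
  intro hcl
  have hne : {o | NetInto x s o}.Nonempty := h' s hcl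
  have hμ : NetInto x s (sInf {o | NetInto x s o}) := csInf_mem hne
  have hμmin : ∀ o, NetInto x s o → sInf {o | NetInto x s o} ≤ o := fun o ho => csInf_le' ho
  set μ := sInf {o | NetInto x s o} with hμdef
  have hreg : μ.cof.ord = μ := regular_of_min hμ hμmin
  obtain ⟨hμ0, g, hgs, hgt⟩ := hμ
  haveI : Nonempty μ.ToType := Ordinal.nonempty_toType_iff.2 hμ0
  have hκμ : κ ≤ μ := hmin μ ⟨hμ0, g, fun a => hs (hgs a), hgt⟩
  have hcof : Cardinal.mk ↥s < μ.cof := by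
    have h1 : κ.card ≤ μ.card := Ordinal.card_le_card hκμ
    have h2 : μ.card = μ.cof := by
      conv_lhs => rw [← hreg]
      exact Cardinal.card_ord _
    exact hcard.trans_le (h1.trans h2.le)
  have hfib : ∀ d : ↥s, ∃ b : μ.ToType, ∀ a, g a = ↑d → a < b := by
    intro d
    by_contra hcon
    push_neg at hcon
    have : (d : X) ∈ NbhdCore x := by
      refine const_mem_core hμ0 g hgt fun a => ?_
      obtain ⟨b, hb1, hb2⟩ := hcon a
      exact ⟨b, hb2, hb1⟩
    exact hAN d (hs d.2) this
  choose b hb using hfib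
  set e := Ordinal.ToType.mk (o := μ) with he
  have hsup : (⨆ d : ↥s, ((e.symm (b d) : Iio μ) : Ordinal)) < μ :=
    Ordinal.iSup_lt_ord hcof fun d => (e.symm (b d)).2
  set β := e ⟨_, hsup⟩ with hβ
  have hβs : g β ∈ s := hgs β
  have hlt2 : β < b ⟨g β, hβs⟩ := hb _ _ rfl
  have h3 : e.symm β < e.symm (b ⟨g β, hβs⟩) := e.symm.lt_iff_lt.2 hlt2
  have h4 : ((e.symm β : Iio μ) : Ordinal) < (e.symm (b ⟨g β, hβs⟩) : Iio μ) := h3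
  have h5 : ((e.symm β : Iio μ) : Ordinal) = ⨆ d : ↥s, ((e.symm (b d) : Iio μ) : Ordinal) := by
    rw [hβ, e.symm_apply_apply]
  rw [h5] at h4
  exact absurd (Ordinal.le_iSup (fun d : ↥s => ((e.symm (b d) : Iio μ) : Ordinal)) ⟨g β, hβs⟩)
    h4.not_ge

end Aux2


lemma exists_spoke {X : Type u} [TopologicalSpace X] {x : X} (h : RadialAt x)
    {A : Set X} (hAN : ∀ a ∈ A, a ∉ NbhdCore x) (hc : x ∈ closure A) :
    ∃ T : Set X, x ∈ T ∧ NbhdCore x ⊆ T ∧ WellBasedWithin x T ∧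
      T ⊆ A ∪ NbhdCore x ∧ x ∈ closure (T ∩ A) := by
  have h' : ∀ B : Set X, x ∈ closure B → ∃ o : Ordinal.{u}, NetInto x B o := by
    intro B hB
    obtain ⟨o, ho1, ho2⟩ := h B hB
    exact ⟨o, ho1, ho2⟩
  have hne : {o | NetInto x A o}.Nonempty := h' A hc
  have hκ : NetInto x A (sInf {o | NetInto x A o}) := csInf_mem hne
  have hmin : ∀ o, NetInto x A o → sInf {o | NetInto x A o} ≤ o := fun o ho => csInf_le' ho
  set κ := sInf {o | NetInto x A o} with hκdef
  have hreg : κ.cof.ord = κ := regular_of_min hκ hmin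
  obtain ⟨hκ0, f, hfA, hft⟩ := hκ
  haveI : Nonempty κ.ToType := Ordinal.nonempty_toType_iff.2 hκ0
  have hxN : x ∈ NbhdCore x := mem_nbhdCore_aux
  refine ⟨NbhdCore x ∪ range f, Or.inl hxN, subset_union_left, ?_, ?_, ?_⟩
  · -- WellBasedWithin
    set V : κ.ToType → Set X := fun a => NbhdCore x ∪ f '' Ici a with hV
    have hVT : ∀ a, V a ⊆ NbhdCore x ∪ range f := fun a =>
      union_subset_union_right _ (image_subset_range _ _)
    have hanti : ∀ a b : κ.ToType, a ≤ b → V b ⊆ V a := fun a b hab =>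
      union_subset_union_right _ (image_mono (Ici_subset_Ici.2 hab))
    refine ⟨range V, ?_, ?_, ?_, ?_⟩
    · rintro _ ⟨a, rfl⟩
      refine ⟨hVT a, ?_⟩
      by_contra hVa
      have hxcl : x ∈ closure ((f '' Iio a) \ V a) := by
        rw [mem_closure_iff_nhds]
        intro W hW
        have : ¬ (W ∩ (NbhdCore x ∪ range f) ⊆ V a) := by
          intro hsub
          exact hVa (mem_nhdsWithin_iff_exists_mem_nhds_inter.2 ⟨W, hW, hsub⟩)
        obtain ⟨y, ⟨hyW, hyT⟩, hyV⟩ := not_subset.1 this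
        have hyN : y ∉ NbhdCore x := fun hyN => hyV (Or.inl hyN)
        obtain ⟨b, rfl⟩ := hyT.resolve_left hyN
        have hba : b < a := by
          by_contra hba
          exact hyV (Or.inr ⟨b, not_lt.1 hba, rfl⟩)
        exact ⟨f b, hyW, ⟨b, hba, rfl⟩, hyV⟩
      have hsA : (f '' Iio a) \ V a ⊆ A := fun y hy => by
        obtain ⟨b, _, rfl⟩ := hy.1
        exact hfA b
      have hcard : Cardinal.mk ↥((f '' Iio a) \ V a) < κ.card := by
        haveI inst : IsWellOrder κ.ToType ((· < ·) : κ.ToType → κ.ToType → Prop) :=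
          isWellOrder_lt
        have e1 : Cardinal.mk ↥((f '' Iio a) \ V a) ≤ Cardinal.mk ↥(f '' Iio a) :=
          Cardinal.mk_le_mk_of_subset diff_subset
        have e2 : Cardinal.mk ↥(f '' Iio a) ≤ Cardinal.mk ↥(Iio a) := Cardinal.mk_image_le
        have e3 : Cardinal.mk ↥(Iio a) = (Ordinal.typein (α := κ.ToType) (· < ·) a).card :=
          Ordinal.card_typein (r := ((· < ·) : κ.ToType → κ.ToType → Prop)) a
        have e4 : (Ordinal.typein (α := κ.ToType) (· < ·) a).card < κ.cof :=
          Cardinal.lt_ord.1 (by rw [hreg]; exact Ordinal.typein_lt_self a)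
        have e5 : κ.cof = κ.card := by
          conv_rhs => rw [← hreg]
          exact (Cardinal.card_ord _).symm
        exact ((e1.trans e2).trans_eq e3).trans_lt (e5 ▸ e4)
      exact not_closure_small h' hAN hmin hsA hcard hxcl
    · intro U hUT hUnb
      obtain ⟨W, hW, hWU⟩ := mem_nhdsWithin_iff_exists_mem_nhds_inter.1 hUnb
      have hpre : f ⁻¹' W ∈ (atTop : Filter κ.ToType) := hft hW
      obtain ⟨a, ha⟩ := Filter.mem_atTop_sets.1 hpre
      refine ⟨V a, mem_range_self a, fun y hy => hWU ⟨?_, hVT a hy⟩⟩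
      rcases hy with hyN | ⟨b, hab, rfl⟩
      · exact nbhdCore_subset_aux hW hyN
      · exact ha b hab
    · rintro _ ⟨a, rfl⟩ _ ⟨b, rfl⟩ _
      rcases le_total a b with hab | hab
      · exact Or.inr (hanti a b hab)
      · exact Or.inl (hanti b a hab)
    · rw [Set.wellFoundedOn_range]
      refine Subrelation.wf (r := (· < ·)) ?_ wellFounded_lt
      intro a b hab
      by_contra hba
      exact hab.not_subset (hanti b a (not_lt.1 hba))
  · rintro y (hy | ⟨a, rfl⟩)
    · exact Or.inr hy
    · exact Or.inl (hfA a)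
  · exact mem_closure_of_tendsto hft
      (Filter.Eventually.of_forall fun a => ⟨Or.inr (mem_range_self a), hfA a⟩)


/-- If `X` is radial at `x`, then `x` admits a spoke system `(S i)` such that for
all distinct `i, j`, `x` is not in the closure of `(S i ∩ S j) \ N_x`. -/
theorem stmt_12 {X : Type u} [TopologicalSpace X] (x : X) (h : RadialAt x) :
    ∃ (I : Type u) (S : I → Set X), IsSpokeSystem x S ∧
      ∀ i j : I, i ≠ j → x ∉ closure ((S i ∩ S j) \ NbhdCore x) := by
  classical
  set Good : Set (Set (Set X)) :=
    {𝒮 | (∀ S ∈ 𝒮, x ∈ S ∧ NbhdCore x ⊆ S ∧ WellBasedWithin x S) ∧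
      𝒮.Pairwise fun S S' => x ∉ closure ((S ∩ S') \ NbhdCore x)} with hGooddef
  have hxN : x ∈ NbhdCore x := mem_nbhdCore_aux
  have hN0 : ({NbhdCore x} : Set (Set X)) ∈ Good := by
    constructor
    · intro S hS
      rw [mem_singleton_iff] at hS
      subst hS
      refine ⟨hxN, Subset.rfl, {NbhdCore x}, ?_, ?_, ?_, ?_⟩
      · intro b hb
        rw [mem_singleton_iff] at hb
        subst hb
        exact ⟨Subset.rfl, self_mem_nhdsWithin⟩
      · intro U hUS hU
        refine ⟨NbhdCore x, rfl, ?_⟩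
        obtain ⟨W, hW, hWU⟩ := mem_nhdsWithin_iff_exists_mem_nhds_inter.1 hU
        exact fun y hy => hWU ⟨nbhdCore_subset_aux hW hy, hy⟩
      · exact Set.pairwise_singleton _ _
      · exact Set.wellFoundedOn_singleton
    · exact Set.pairwise_singleton _ _
  obtain ⟨𝒮, h𝒮N, h𝒮max⟩ := zorn_subset_nonempty Good (fun c hc hchain hcne => by
    refine ⟨⋃₀ c, ⟨?_, ?_⟩, fun s hs => subset_sUnion_of_mem hs⟩
    · rintro S ⟨t, htc, hSt⟩
      exact (hc htc).1 S hSt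
    · rintro S ⟨t, htc, hSt⟩ S' ⟨t', ht'c, hS't'⟩ hne'
      rcases hchain.total htc ht'c with hsub | hsub
      · exact (hc ht'c).2 (hsub hSt) hS't' hne'
      · exact (hc htc).2 hSt (hsub hS't') hne') {NbhdCore x} hN0
  have hGood𝒮 : 𝒮 ∈ Good := h𝒮max.1
  haveI : Nonempty ↥𝒮 := ⟨⟨NbhdCore x, h𝒮N rfl⟩⟩
  refine ⟨↥𝒮, fun i => (i : Set X), ⟨inferInstance,
    fun i => (hGood𝒮.1 _ i.2).2.1, fun i => (hGood𝒮.1 _ i.2).1,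
    fun i => (hGood𝒮.1 _ i.2).2.2, ?_, ?_⟩, ?_⟩
  · -- unions of subspace neighbourhoods are neighbourhoods
    intro U hU
    by_contra hUx
    have hUN : ∀ i : ↥𝒮, NbhdCore x ⊆ U i := by
      intro i
      obtain ⟨W, hW, hWU⟩ := mem_nhdsWithin_iff_exists_mem_nhds_inter.1 (hU i).2
      exact fun y hy => hWU ⟨nbhdCore_subset_aux hW hy, (hGood𝒮.1 _ i.2).2.1 hy⟩
    have hAN : ∀ a ∈ (⋃ i, U i)ᶜ, a ∉ NbhdCore x := fun a ha han =>
      ha (mem_iUnion.2 ⟨Classical.arbitrary _, hUN _ han⟩)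
    have hcA : x ∈ closure (⋃ i, U i)ᶜ := by
      rw [mem_closure_iff_nhds]
      intro W hW
      by_contra hcon
      exact hUx (Filter.mem_of_superset hW fun y hyW => by
        by_contra hyU
        exact hcon ⟨y, hyW, hyU⟩)
    obtain ⟨T, hxT, hNT, hWB, hTsub, hTA⟩ := exists_spoke h hAN hcA
    have noacc : ∀ S', S' ∈ 𝒮 → x ∉ closure ((⋃ i, U i)ᶜ ∩ S') := by
      intro S' hS' hclo
      obtain ⟨W, hW, hWU⟩ :=
        mem_nhdsWithin_iff_exists_mem_nhds_inter.1 (hU ⟨S', hS'⟩).2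
      rw [mem_closure_iff_nhds] at hclo
      obtain ⟨y, hyW, hyA, hyS⟩ := hclo W hW
      exact hyA (mem_iUnion.2 ⟨⟨S', hS'⟩, hWU ⟨hyW, hyS⟩⟩)
    have hTS : ∀ S' ∈ 𝒮, x ∉ closure ((T ∩ S') \ NbhdCore x) := by
      intro S' hS' hx'
      have hsub : (T ∩ S') \ NbhdCore x ⊆ (⋃ i, U i)ᶜ ∩ S' := by
        rintro y ⟨⟨hyT, hyS⟩, hyN⟩
        rcases hTsub hyT with hyA | hyN'
        · exact ⟨hyA, hyS⟩
        · exact absurd hyN' hyN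
      exact noacc S' hS' (closure_mono hsub hx')
    have hGoodIns : insert T 𝒮 ∈ Good := by
      constructor
      · rintro S (rfl | hS)
        · exact ⟨hxT, hNT, hWB⟩
        · exact hGood𝒮.1 S hS
      · refine Set.pairwise_insert.2 ⟨hGood𝒮.2, fun S' hS' _ => ⟨hTS S' hS', ?_⟩⟩
        rw [inter_comm]
        exact hTS S' hS'
    have hTin : T ∈ 𝒮 := h𝒮max.2 hGoodIns (subset_insert _ _) (mem_insert _ _)
    rw [inter_comm] at hTA
    exact noacc T hTin hTA
  · -- refinement
    intro V hV
    refine ⟨fun i => (i : Set X) ∩ V, fun i => ⟨inter_subset_left,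
      mem_nhdsWithin_iff_exists_mem_nhds_inter.2 ⟨V, hV, fun y hy => ⟨hy.2, hy.1⟩⟩⟩,
      iUnion_subset fun i => inter_subset_right⟩
  · -- independence
    intro i j hij
    exact hGood𝒮.2 i.2 j.2 fun hval => hij (Subtype.ext hval)
end

section
/- Let X be a space and x ∈ X admit a finite independent spoke system whose spokes are all first-countable at x (i.e., x has a countable neighbourhood base in each spoke). Then X is first-countable at x. -/
open Filter Topology Set

universe u v

/-- Lemma 4.3: if `x` admits a finite independent spoke system whose spokes are
all first-countable at `x`, then `X` is first-countable at `x`. -/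
theorem stmt_15 {X : Type u} [TopologicalSpace X] {I : Type v} [Finite I] (x : X)
    (S : I → Set X) (h : IsIndepSpokeSystem x S)
    (hfc : ∀ i, ∃ B : Set (Set X), B.Countable ∧
      (∀ b ∈ B, b ⊆ S i ∧ b ∈ nhdsWithin x (S i)) ∧
      ∀ U, U ⊆ S i → U ∈ nhdsWithin x (S i) → ∃ b ∈ B, b ⊆ U) :
    FirstCountableAt x := by
  choose B hBc hBmem hBbase using hfc
  obtain ⟨⟨_, _, _, _, hunion, hbase⟩, _⟩ := h
  refine ⟨(fun f : I → Set X => ⋃ i, f i) '' (Set.univ.pi B), ?_, ?_, ?_⟩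
  · exact (Set.countable_univ_pi hBc).image _
  · rintro b ⟨f, hf, rfl⟩
    exact hunion f fun i => hBmem i _ (hf i (Set.mem_univ i))
  · intro V hV
    obtain ⟨U, hU, hUV⟩ := hbase V hV
    choose g hg hgU using fun i => hBbase i (U i) (hU i).1 (hU i).2
    exact ⟨⋃ i, g i, ⟨g, fun i _ => hg i, rfl⟩,
      (Set.iUnion_mono hgU).trans hUV⟩
end

section
/- Let X be a topological space and x ∈ X. If x admits an independent spoke system and X is strongly Fréchet at x, then X is first-countable at x. Consequently, X is first-countable at x if and only if x admits an independent spoke system and X is strongly Fréchet at x. -/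
open Filter Topology Set

universe u v

section A
variable {X : Type u} [TopologicalSpace X] (x : X)

lemma nbhdCore_subset_of_mem_nhds {t : Set X} (ht : t ∈ nhds x) : NbhdCore x ⊆ t :=
  sInter_subset_of_mem ht

lemma nbhdCore_subset_nhdsWithin {S t : Set X} (hS : NbhdCore x ⊆ S)
    (ht : t ∈ nhdsWithin x S) : NbhdCore x ⊆ t := by
  rw [mem_nhdsWithin] at ht
  obtain ⟨v, hv, hxv, hvt⟩ := ht
  exact fun y hy => hvt ⟨nbhdCore_subset_of_mem_nhds x (hv.mem_nhds hxv) hy, hS hy⟩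

/-- Step 1: each well-based subspace has a countable decreasing neighbourhood base
within it, which is moreover either constant or nowhere contained in its intersection. -/
lemma spoke_countable_base (hSF : StronglyFrechetAt x) {S : Set X}
    (hWB : WellBasedWithin x S) :
    ∃ D : ℕ → Set X, Antitone D ∧ (∀ n, D n ⊆ S ∧ D n ∈ nhdsWithin x S) ∧
      (∀ U ∈ nhdsWithin x S, ∃ n, D n ⊆ U) ∧
      ((∀ n, D n = D 0) ∨ (∀ n, ¬ D n ⊆ ⋂ k, D k)) := by
  classical
  obtain ⟨B, hBmem, hBbase, hBchain, -⟩ := hWB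
  have hco : ∃ f : ℕ → Set X, (∀ n, f n ∈ B) ∧ ∀ b ∈ B, ∃ n, f n ⊆ b := by
    by_contra hno
    push_neg at hno
    obtain ⟨b0, hb0, -⟩ := hBbase S Subset.rfl self_mem_nhdsWithin
    set m := ⋂₀ B with hm
    have hmS : m ⊆ S := (sInter_subset_of_mem hb0).trans (hBmem b0 hb0).1
    have hmnot : m ∉ nhdsWithin x S := by
      intro hmem
      obtain ⟨b, hbB, hbm⟩ := hBbase m hmS hmem
      obtain ⟨b', hb'B, hb'⟩ := hno (fun _ => b) (fun _ => hbB)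
      exact hb' 0 (hbm.trans (sInter_subset_of_mem hb'B))
    have hcl : x ∈ closure (S \ m) := by
      rw [mem_closure_iff_nhds]
      intro t ht
      have htS : t ∩ S ∈ nhdsWithin x S :=
        inter_mem (nhdsWithin_le_nhds ht) self_mem_nhdsWithin
      obtain ⟨b, hbB, hbt⟩ := hBbase (t ∩ S) inter_subset_right htS
      have hnb : ¬ b ⊆ m := by
        intro h
        exact hmnot (mem_of_superset (hBmem b hbB).2 h)
      obtain ⟨y, hyb, hym⟩ := not_subset.1 hnb
      exact ⟨y, (hbt hyb).1, (hbt hyb).2, hym⟩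
    obtain ⟨uu, hu, hconv⟩ := hSF (fun _ => S \ m) (fun _ _ _ => Subset.rfl) (fun _ => hcl)
    have hb : ∀ n, ∃ b ∈ B, uu n ∉ b := by
      intro n
      have h2 := (hu n).2
      rw [hm, mem_sInter] at h2
      push_neg at h2
      exact h2
    choose b hbB hbu using hb
    obtain ⟨bs, hbsB, hbs⟩ := hno b hbB
    have hsub : ∀ n, bs ⊆ b n := by
      intro n
      rcases eq_or_ne bs (b n) with h | h
      · exact h.le
      · rcases hBchain hbsB (hbB n) h with h' | h'
        · exact h'
        · exact absurd h' (hbs n)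
    have hbsmem : bs ∈ nhdsWithin x S := (hBmem bs hbsB).2
    rw [mem_nhdsWithin] at hbsmem
    obtain ⟨t, hto, hxt, hts⟩ := hbsmem
    have hev : ∀ᶠ n in atTop, uu n ∈ t := hconv (hto.mem_nhds hxt)
    obtain ⟨n, hn⟩ := hev.exists
    exact hbu n (hsub n (hts ⟨hn, (hu n).1⟩))
  obtain ⟨f, hfB, hfco⟩ := hco
  set W : ℕ → Set X := fun n => ⋂ k ∈ Finset.range (n + 1), f k with hW
  have hWanti : Antitone W := by
    intro n m hnm
    exact biInter_subset_biInter_left (Finset.range_subset_range.2 (Nat.succ_le_succ hnm))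
  have hWmem : ∀ n, W n ⊆ S ∧ W n ∈ nhdsWithin x S := by
    intro n
    constructor
    · exact (biInter_subset_of_mem (by simp : 0 ∈ Finset.range (n+1))).trans
        (hBmem (f 0) (hfB 0)).1
    · exact (Finset.iInter_mem_sets (Finset.range (n+1))).2
        (fun k _ => (hBmem (f k) (hfB k)).2)
  have hWbase : ∀ U ∈ nhdsWithin x S, ∃ n, W n ⊆ U := by
    intro U hU
    have hUS : U ∩ S ∈ nhdsWithin x S := inter_mem hU self_mem_nhdsWithin
    obtain ⟨b, hbB, hbU⟩ := hBbase (U ∩ S) inter_subset_right hUS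
    obtain ⟨n, hn⟩ := hfco b hbB
    refine ⟨n, ?_⟩
    exact ((biInter_subset_of_mem (by simp : n ∈ Finset.range (n+1))).trans hn).trans
      (hbU.trans inter_subset_left)
  by_cases hP : ∃ n0, ∀ m, W n0 ⊆ W m
  · obtain ⟨n0, hn0⟩ := hP
    refine ⟨fun _ => W n0, antitone_const, fun _ => hWmem n0, ?_, Or.inl fun _ => rfl⟩
    intro U hU
    obtain ⟨n, hn⟩ := hWbase U hU
    exact ⟨0, (hn0 n).trans hn⟩
  · push_neg at hP
    refine ⟨W, hWanti, hWmem, hWbase, Or.inr ?_⟩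
    intro n hn
    obtain ⟨m, hm⟩ := hP n
    exact hm (hn.trans (iInter_subset _ m))

end A

section B
variable {X : Type u} [TopologicalSpace X] (x : X)

/-- Theorem 4.4, hard direction. -/
lemma indep_spoke_firstCountable {I : Type v} {S : I → Set X}
    (h : IsIndepSpokeSystem x S) (hSF : StronglyFrechetAt x) :
    FirstCountableAt x := by
  classical
  obtain ⟨⟨hne, hcore, hxS, hWB, hUnion, -⟩, hind⟩ := h
  choose V hVanti hVmem hVbase hVdich using fun i => spoke_countable_base x hSF (hWB i)
  have hBn : ∀ n, (⋃ i, V i n) ∈ nhds x := fun n =>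
    hUnion (fun i => V i n) (fun i => hVmem i n)
  refine ⟨Set.range (fun n => ⋃ i, V i n), countable_range _, ?_, ?_⟩
  · rintro b ⟨n, rfl⟩; exact hBn n
  · intro U hU
    by_contra hbad
    push_neg at hbad
    -- spokes whose `n`-th basic set escapes `U`
    set T : ℕ → Set I := fun n => {i | ¬ V i n ⊆ U} with hT
    have hTne : ∀ n, ∃ i, i ∈ T n := by
      intro n
      have h1 : ¬ (⋃ i, V i n) ⊆ U := hbad _ ⟨n, rfl⟩
      obtain ⟨y, hy, hyU⟩ := not_subset.1 h1
      obtain ⟨i, hi⟩ := mem_iUnion.1 hy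
      exact ⟨i, fun hsub => hyU (hsub hi)⟩
    have hUin : ∀ i, U ∈ nhdsWithin x (S i) := fun i => nhdsWithin_le_nhds hU
    choose gw hgw using fun i => hVbase i U (hUin i)
    have hTlt : ∀ n i, i ∈ T n → n < gw i := by
      intro n i hi
      by_contra hle
      push_neg at hle
      exact hi ((hVanti i hle).trans (hgw i))
    have hTanti : Antitone T := by
      intro n m hnm i hi hsub
      exact hi ((hVanti i hnm).trans hsub)
    have hTnp : ∀ n i, i ∈ T n → ∀ k, ¬ V i k ⊆ ⋂ m, V i m := by
      intro n i hi
      rcases hVdich i with hconst | hnp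
      · exfalso
        refine hi ?_
        rw [hconst n, ← hconst (gw i)]
        exact hgw i
      · exact hnp
    -- the witnessing antitone sequence of sets
    set A : ℕ → Set X := fun n => ⋃ i ∈ T n, (V i n \ ⋂ k, V i k) with hA
    have hAanti : Antitone A := by
      intro n m hnm
      refine iUnion₂_subset fun i hi => ?_
      exact subset_iUnion₂_of_subset i (hTanti hnm hi)
        (diff_subset_diff_left (hVanti i hnm))
    have hAcl : ∀ n, x ∈ closure (A n) := by
      intro n
      rw [mem_closure_iff_nhds]
      intro t ht
      obtain ⟨i, hi⟩ := hTne n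
      obtain ⟨m, hm⟩ := hVbase i t (nhdsWithin_le_nhds ht)
      have h1 : V i (max n m) ⊆ t := (hVanti i (le_max_right n m)).trans hm
      have h2 : V i (max n m) ⊆ V i n := hVanti i (le_max_left n m)
      obtain ⟨y, hy, hyM⟩ := not_subset.1 (hTnp n i hi (max n m))
      exact ⟨y, h1 hy, mem_iUnion₂_of_mem hi ⟨h2 hy, hyM⟩⟩
    obtain ⟨uu, hu, hconv⟩ := hSF A hAanti hAcl
    have hu' : ∀ n, ∃ i, i ∈ T n ∧ uu n ∈ V i n \ ⋂ k, V i k := by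
      intro n
      obtain ⟨i, hi, h⟩ := mem_iUnion₂.1 (hu n)
      exact ⟨i, hi, h⟩
    choose iS hiT hiV using hu'
    -- depth excluding `uu n` from its own spoke
    have hc : ∀ n, ∃ k, uu n ∉ V (iS n) k := by
      intro n
      have := (hiV n).2
      rw [mem_iInter] at this
      push_neg at this
      exact this
    choose c hc using hc
    set p : I → ℕ := fun i => (Finset.range (gw i)).sup c with hp
    have hpx : ∀ n i, iS n = i → uu n ∉ V i (p i) := by
      intro n i hni hmem
      have hlt : n < gw i := hni ▸ hTlt n (iS n) (hiT n)
      have hle : c n ≤ p i := Finset.le_sup (Finset.mem_range.2 hlt)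
      exact hc n (hni ▸ (hVanti i hle) hmem)
    have hWs : (⋃ i, V i (p i)) ∈ nhds x :=
      hUnion (fun i => V i (p i)) (fun i => hVmem i (p i))
    obtain ⟨n0, hn0⟩ := (hconv.eventually_mem hWs).exists
    obtain ⟨j, hj⟩ := mem_iUnion.1 hn0
    rcases eq_or_ne j (iS n0) with heq | hne'
    · exact hpx n0 j heq.symm hj
    · -- `uu n0` lies in two distinct spokes, hence in the core, hence in every
      -- spoke neighbourhood: contradiction
      have h1 : uu n0 ∈ S j := (hVmem j (p j)).1 hj
      have h2 : uu n0 ∈ S (iS n0) := (hVmem (iS n0) n0).1 (hiV n0).1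
      have hcoremem : uu n0 ∈ NbhdCore x := by
        rw [← hind j (iS n0) hne']
        exact ⟨h1, h2⟩
      refine (hiV n0).2 (mem_iInter.2 fun k => ?_)
      exact nbhdCore_subset_nhdsWithin x (hcore (iS n0)) (hVmem (iS n0) k).2 hcoremem

end B

section C
variable {X : Type u} [TopologicalSpace X] (x : X)

lemma fc_antitone_basis (h : FirstCountableAt x) :
    ∃ C : ℕ → Set X, Antitone C ∧ (∀ n, C n ∈ nhds x) ∧
      ∀ U ∈ nhds x, ∃ n, C n ⊆ U := by
  classical
  obtain ⟨B, hc, hmem, hbase⟩ := h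
  have hc' : (insert univ B).Countable := hc.insert _
  obtain ⟨f, hf⟩ := Set.Countable.exists_eq_range hc' ⟨univ, mem_insert _ _⟩
  have hfmem : ∀ k, f k ∈ nhds x := by
    intro k
    have : f k ∈ insert univ B := hf ▸ mem_range_self k
    rcases this with h | h
    · rw [h]; exact univ_mem
    · exact hmem _ h
  refine ⟨fun n => ⋂ k ∈ Finset.range (n+1), f k, ?_, ?_, ?_⟩
  · intro n m hnm
    exact biInter_subset_biInter_left (Finset.range_subset_range.2 (Nat.succ_le_succ hnm))
  · intro n
    exact (Finset.iInter_mem_sets (Finset.range (n+1))).2 (fun k _ => hfmem k)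
  · intro U hU
    obtain ⟨b, hbB, hbU⟩ := hbase U hU
    have : b ∈ range f := hf ▸ mem_insert_of_mem _ hbB
    obtain ⟨k, rfl⟩ := this
    exact ⟨k, (biInter_subset_of_mem (by simp : k ∈ Finset.range (k+1))).trans hbU⟩

lemma fc_stronglyFrechet (h : FirstCountableAt x) : StronglyFrechetAt x := by
  classical
  obtain ⟨C, hCanti, hCmem, hCbase⟩ := fc_antitone_basis x h
  intro A hA hcl
  have hpick : ∀ n, ∃ y, y ∈ C n ∩ A n := by
    intro n
    exact mem_closure_iff_nhds.1 (hcl n) (C n) (hCmem n)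
  choose uu hu using hpick
  refine ⟨uu, fun n => (hu n).2, ?_⟩
  rw [tendsto_atTop_nhds]
  intro U hxU hUo
  obtain ⟨k, hk⟩ := hCbase U (hUo.mem_nhds hxU)
  exact ⟨k, fun n hn => hk ((hCanti hn) (hu n).1)⟩

lemma fc_wellBased_univ (h : FirstCountableAt x) : WellBasedWithin x (univ : Set X) := by
  classical
  obtain ⟨C, hCanti, hCmem, hCbase⟩ := fc_antitone_basis x h
  refine ⟨range C, ?_, ?_, ?_, ?_⟩
  · rintro b ⟨n, rfl⟩
    exact ⟨subset_univ _, by rw [nhdsWithin_univ]; exact hCmem n⟩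
  · intro U _ hU
    rw [nhdsWithin_univ] at hU
    obtain ⟨n, hn⟩ := hCbase U hU
    exact ⟨C n, mem_range_self n, hn⟩
  · rintro _ ⟨n, rfl⟩ _ ⟨m, rfl⟩ _
    rcases le_total n m with h' | h'
    · exact Or.inr (hCanti h')
    · exact Or.inl (hCanti h')
  · -- well-foundedness via the least-index measure
    have key : ∀ a b : ↥(range C), (b : Set X) ⊂ (a : Set X) →
        Nat.find a.2 < Nat.find b.2 := by
      intro a b hab
      by_contra hle
      push_neg at hle
      have h1 : C (Nat.find a.2) ⊆ C (Nat.find b.2) := hCanti hle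
      rw [Nat.find_spec a.2, Nat.find_spec b.2] at h1
      exact (hab.trans_subset h1).false
    have : Subrelation (fun a b : ↥(range C) => (b : Set X) ⊂ (a : Set X))
        (InvImage (· < ·) (fun a : ↥(range C) => Nat.find a.2)) := fun {a b} h => key a b h
    exact this.wf (InvImage.wf _ Nat.lt_wfRel.wf)

end C

/-- Theorem 4.4 and Corollary 4.5: if `x` admits an independent spoke system and
`X` is strongly Fréchet at `x`, then `X` is first-countable at `x`; consequently,
`X` is first-countable at `x` iff `x` admits an independent spoke system and `X`
is strongly Fréchet at `x`. -/
theorem stmt_16 {X : Type u} [TopologicalSpace X] (x : X) :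
    (((∃ (I : Type u) (S : I → Set X), IsIndepSpokeSystem x S) ∧
        StronglyFrechetAt x) → FirstCountableAt x) ∧
    (FirstCountableAt x ↔
      (∃ (I : Type u) (S : I → Set X), IsIndepSpokeSystem x S) ∧
        StronglyFrechetAt x) := by
  classical
  have hspoke : FirstCountableAt x → ∃ (I : Type u) (S : I → Set X), IsIndepSpokeSystem x S := by
    intro h
    refine ⟨PUnit.{u+1}, fun _ => univ, ⟨⟨inferInstance, fun _ => subset_univ _,
      fun _ => mem_univ x, fun _ => fc_wellBased_univ x h, ?_, ?_⟩, ?_⟩⟩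
    · intro U hU
      have h1 := (hU PUnit.unit).2
      rw [nhdsWithin_univ] at h1
      exact mem_of_superset h1 (subset_iUnion U PUnit.unit)
    · intro V hV
      refine ⟨fun _ => V, fun _ => ⟨subset_univ _, by
        rw [nhdsWithin_univ]; exact hV⟩, iUnion_subset fun _ => Subset.rfl⟩
    · intro i j hij
      exact absurd (Subsingleton.elim i j) hij
  have hhard : ((∃ (I : Type u) (S : I → Set X), IsIndepSpokeSystem x S) ∧
      StronglyFrechetAt x) → FirstCountableAt x := by
    rintro ⟨⟨I, S, hS⟩, hSF⟩
    exact indep_spoke_firstCountable x hS hSF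
  exact ⟨hhard, ⟨fun h => ⟨hspoke h, fc_stronglyFrechet x h⟩, hhard⟩⟩
end

section
/- The one-point compactification of an uncountable discrete space is strongly Fréchet but not first-countable at the point at infinity; consequently it admits no independent spoke system at that point. -/
open Filter Topology Set OnePoint

universe u v

section Aux1
variable {Y : Type u} [TopologicalSpace Y] [DiscreteTopology Y]

lemma mem_nhds_infty_iff' {V : Set (OnePoint Y)} :
    V ∈ 𝓝 (∞ : OnePoint Y) ↔ ∞ ∈ V ∧ (((↑) : Y → OnePoint Y) ⁻¹' V)ᶜ.Finite := by
  rw [OnePoint.nhds_infty_eq, Filter.coclosedCompact_eq_cocompact,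
    Filter.cocompact_eq_cofinite, Filter.mem_sup, Filter.mem_map, Filter.mem_pure,
    Filter.mem_cofinite, and_comm]

lemma tendsto_coe_infty_of_injective {y : ℕ → Y} (hy : Function.Injective y) :
    Tendsto (fun n => (y n : OnePoint Y)) atTop (𝓝 (∞ : OnePoint Y)) := by
  intro V hV
  obtain ⟨-, hfin⟩ := mem_nhds_infty_iff'.1 hV
  rw [Filter.mem_map, ← Nat.cofinite_eq_atTop, Filter.mem_cofinite]
  have : ((fun n => (y n : OnePoint Y)) ⁻¹' V)ᶜ = y ⁻¹' ((((↑) : Y → OnePoint Y) ⁻¹' V)ᶜ) := by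
    ext n; simp
  rw [this]
  exact hfin.preimage hy.injOn

lemma infinite_of_infty_mem_closure {A : Set (OnePoint Y)}
    (h : (∞ : OnePoint Y) ∈ closure A) (h2 : (∞ : OnePoint Y) ∉ A) :
    (((↑) : Y → OnePoint Y) ⁻¹' A).Infinite := by
  intro hfin
  have hV : ((((↑) : Y → OnePoint Y) '' (((↑) : Y → OnePoint Y) ⁻¹' A))ᶜ : Set (OnePoint Y))
      ∈ 𝓝 (∞ : OnePoint Y) := by
    rw [mem_nhds_infty_iff']
    constructor
    · simp only [Set.mem_compl_iff, Set.mem_image]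
      rintro ⟨z, -, hz⟩; exact OnePoint.coe_ne_infty z hz
    · rw [Set.preimage_compl, compl_compl, Set.preimage_image_eq _ OnePoint.coe_injective]
      exact hfin
  obtain ⟨z, hz1, hz2⟩ := mem_closure_iff_nhds.1 h _ hV
  cases z with
  | infty => exact h2 hz2
  | coe w => exact hz1 (Set.mem_image_of_mem _ hz2)

lemma stronglyFrechet_onePoint (p : OnePoint Y) : StronglyFrechetAt p := by
  intro A hA hcl
  cases p with
  | coe x =>
    -- {x} is open, so x ∈ A n for all n
    have hopen : IsOpen ({(x : OnePoint Y)} : Set (OnePoint Y)) := by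
      have := OnePoint.isOpenEmbedding_coe (X := Y) |>.isOpenMap _ (isOpen_discrete ({x} : Set Y))
      simpa using this
    have hmem : ∀ n, (x : OnePoint Y) ∈ A n := by
      intro n
      obtain ⟨z, hz1, hz2⟩ := mem_closure_iff_nhds.1 (hcl n) _ (hopen.mem_nhds rfl)
      rwa [Set.mem_singleton_iff.1 hz1] at hz2
    exact ⟨fun _ => (x : OnePoint Y), hmem, tendsto_const_nhds⟩
  | infty =>
    by_cases hall : ∀ n, (∞ : OnePoint Y) ∈ A n
    · exact ⟨fun _ => ∞, hall, tendsto_const_nhds⟩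
    push_neg at hall
    obtain ⟨m, hm⟩ := hall
    set T : ℕ → Set Y := fun n => ((↑) : Y → OnePoint Y) ⁻¹' A (m + n) with hT
    have hTinf : ∀ n, (T n).Infinite := by
      intro n
      refine infinite_of_infty_mem_closure (hcl (m + n)) ?_
      exact fun h => hm (hA (Nat.le_add_right m n) h)
    -- build an injective selection
    classical
    have hstep : ∀ s : Finset (ℕ × Y), (∀ x ∈ s, x.2 ∈ T x.1) →
        ∃ b : ℕ × Y, b.2 ∈ T b.1 ∧ ∀ a ∈ s, a.1 < b.1 ∧ a.2 ≠ b.2 := by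
      intro s hs
      set N : ℕ := (s.sup Prod.fst) + 1 with hN
      obtain ⟨z, hz⟩ := ((hTinf N).diff (s.image Prod.snd).finite_toSet).nonempty
      refine ⟨(N, z), hz.1, ?_⟩
      intro a ha
      constructor
      · exact Nat.lt_succ_of_le (Finset.le_sup (f := Prod.fst) ha)
      · intro h
        have : a.2 ∈ (s.image Prod.snd : Set Y) := Finset.mem_coe.2 (Finset.mem_image_of_mem Prod.snd ha)
        rw [h] at this
        exact hz.2 this
    obtain ⟨f, hfP, hfr⟩ := exists_seq_of_forall_finset_exists
      (fun a : ℕ × Y => a.2 ∈ T a.1) (fun a b => a.1 < b.1 ∧ a.2 ≠ b.2) hstep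
    set y : ℕ → Y := fun n => (f n).2 with hy
    have hmono : ∀ n, n ≤ (f n).1 := by
      have : StrictMono (fun n => (f n).1) := fun a b hab => (hfr a b hab).1
      exact fun n => this.le_apply
    have hyT : ∀ n, y n ∈ T n := by
      intro n
      have := hfP n
      have hn := hmono n
      have hsub : T ((f n).1) ⊆ T n := fun z hz => hA (by omega) hz
      exact hsub this
    have hyinj : Function.Injective y := by
      intro a b hab
      by_contra hne
      rcases lt_or_gt_of_ne hne with h | h
      · exact (hfr a b h).2 hab
      · exact (hfr b a h).2 hab.symm
    refine ⟨fun n => ((y (n - m) : Y) : OnePoint Y), ?_, ?_⟩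
    · intro n
      have h1 : ((y (n - m) : Y) : OnePoint Y) ∈ A (m + (n - m)) := hyT (n - m)
      exact hA (by omega) h1
    · have h1 : Tendsto (fun n => n - m) atTop (atTop : Filter ℕ) :=
        tendsto_sub_atTop_nat m
      exact (tendsto_coe_infty_of_injective hyinj).comp h1
end Aux1

section Aux
variable {Y : Type u} [TopologicalSpace Y] [DiscreteTopology Y]

lemma mem_nhds_infty_iff'' {V : Set (OnePoint Y)} :
    V ∈ 𝓝 (∞ : OnePoint Y) ↔ ∞ ∈ V ∧ (((↑) : Y → OnePoint Y) ⁻¹' V)ᶜ.Finite := by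
  rw [OnePoint.nhds_infty_eq, Filter.coclosedCompact_eq_cocompact,
    Filter.cocompact_eq_cofinite, Filter.mem_sup, Filter.mem_map, Filter.mem_pure,
    Filter.mem_cofinite, and_comm]

lemma compl_singleton_mem_nhds_infty' (y : Y) :
    ({(y : OnePoint Y)}ᶜ : Set (OnePoint Y)) ∈ 𝓝 (∞ : OnePoint Y) := by
  rw [mem_nhds_infty_iff'']
  refine ⟨by simp, ?_⟩
  have : (((↑) : Y → OnePoint Y) ⁻¹' ({(y : OnePoint Y)}ᶜ))ᶜ = {y} := by
    ext z; simp [OnePoint.coe_eq_coe]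
  rw [this]; exact Set.finite_singleton y

lemma not_firstCountable (hY : ¬ Countable Y) :
    ¬ FirstCountableAt (∞ : OnePoint Y) := by
  rintro ⟨B, hBc, hBn, hBb⟩
  set K : Set Y := ⋃ b ∈ B, (((↑) : Y → OnePoint Y) ⁻¹' b)ᶜ with hK
  have hKc : K.Countable :=
    hBc.biUnion fun b hb => ((mem_nhds_infty_iff''.1 (hBn b hb)).2).countable
  have hyex : ∃ y : Y, y ∉ K := by
    by_contra h
    push_neg at h
    exact hY (Set.countable_univ_iff.1 (hKc.mono fun y _ => h y))
  obtain ⟨y, hy⟩ := hyex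
  have hmem : ∀ b ∈ B, (y : OnePoint Y) ∈ b := by
    intro b hb
    by_contra h
    exact hy (Set.mem_biUnion hb h)
  obtain ⟨b, hb, hbU⟩ := hBb _ (compl_singleton_mem_nhds_infty' y)
  exact hbU (hmem b hb) rfl

lemma core_subset : NbhdCore (∞ : OnePoint Y) ⊆ {(∞ : OnePoint Y)} := by
  intro z hz
  cases z with
  | infty => rfl
  | coe y =>
    exact absurd (hz _ (compl_singleton_mem_nhds_infty' y)) (by simp)

lemma wellbased_countable {S : Set (OnePoint Y)}
    (hwb : WellBasedWithin (∞ : OnePoint Y) S) :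
    (((↑) : Y → OnePoint Y) ⁻¹' S).Countable := by
  classical
  obtain ⟨B, hB1, hB2, hchain, -⟩ := hwb
  set c : Set (OnePoint Y) → Set Y := fun b => ((↑) : Y → OnePoint Y) ⁻¹' (S \ b) with hc
  have hcfin : ∀ b ∈ B, (c b).Finite := by
    intro b hb
    obtain ⟨u, huo, huinf, huS⟩ := mem_nhdsWithin.1 (hB1 b hb).2
    have hufin : (((↑) : Y → OnePoint Y) ⁻¹' u)ᶜ.Finite :=
      (mem_nhds_infty_iff''.1 (huo.mem_nhds huinf)).2
    refine hufin.subset ?_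
    intro z hz
    simp only [hc, Set.mem_preimage, Set.mem_diff] at hz
    intro hcontra
    exact hz.2 (huS ⟨hcontra, hz.1⟩)
  have hcover : ∀ y : Y, (y : OnePoint Y) ∈ S → ∃ b ∈ B, y ∈ c b := by
    intro y hyS
    have hU : S \ {(y : OnePoint Y)} ∈ 𝓝[S] (∞ : OnePoint Y) := by
      rw [Set.diff_eq]
      exact inter_mem_nhdsWithin S (compl_singleton_mem_nhds_infty' y)
    obtain ⟨b, hb, hbsub⟩ := hB2 _ Set.diff_subset hU
    refine ⟨b, hb, ?_⟩
    simp only [hc, Set.mem_preimage, Set.mem_diff]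
    exact ⟨hyS, fun h => (hbsub h).2 rfl⟩
  -- chain of finite complements is countable
  set C : Set (Set Y) := c '' B with hCdef
  have hCchain : IsChain (· ⊆ ·) C := by
    rintro _ ⟨b1, hb1, rfl⟩ _ ⟨b2, hb2, rfl⟩ hne
    rcases eq_or_ne b1 b2 with rfl | hne2
    · exact absurd rfl hne
    rcases hchain hb1 hb2 hne2 with h | h
    · exact Or.inr fun z hz => ⟨hz.1, fun hzb => hz.2 (h hzb)⟩
    · exact Or.inl fun z hz => ⟨hz.1, fun hzb => hz.2 (h hzb)⟩
  have hCfin : ∀ F ∈ C, F.Finite := by rintro _ ⟨b, hb, rfl⟩; exact hcfin b hb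
  have hCc : C.Countable := by
    rw [Set.countable_iff_exists_injOn]
    refine ⟨Set.ncard, ?_⟩
    intro F hF G hG hFG
    rcases eq_or_ne F G with h | hne
    · exact h
    rcases hCchain hF hG hne with h | h
    · exact Set.eq_of_subset_of_ncard_le h hFG.ge (hCfin G hG)
    · exact (Set.eq_of_subset_of_ncard_le h hFG.le (hCfin F hF)).symm
  have : (((↑) : Y → OnePoint Y) ⁻¹' S) ⊆ ⋃ F ∈ C, F := by
    intro y hy
    obtain ⟨b, hb, hyc⟩ := hcover y hy
    exact Set.mem_biUnion ⟨b, hb, rfl⟩ hyc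
  exact ((hCc.biUnion fun F hF => (hCfin F hF).countable).mono this)

end Aux

section Aux2
variable {Y : Type u} [TopologicalSpace Y] [DiscreteTopology Y]

lemma no_indep_spoke (hY : ¬ Countable Y) :
    ¬ ∃ (I : Type u) (S : I → Set (OnePoint Y)),
        IsIndepSpokeSystem (∞ : OnePoint Y) S := by
  rintro ⟨I, S, ⟨⟨-, -, hmemS, hwb, hbig, -⟩, hind⟩⟩
  classical
  have hYne : Nonempty Y := by
    by_contra h
    have := not_nonempty_iff.1 h
    exact hY inferInstance
  set J : Set I := {i | ((((↑) : Y → OnePoint Y)) ⁻¹' (S i)).Infinite} with hJ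
  set f : I → Y := fun i =>
    if h : ((((↑) : Y → OnePoint Y)) ⁻¹' (S i)).Infinite then h.nonempty.some
    else Classical.arbitrary Y with hf
  set U : I → Set (OnePoint Y) := fun i =>
    if ((((↑) : Y → OnePoint Y)) ⁻¹' (S i)).Infinite then S i \ {(f i : OnePoint Y)}
    else {(∞ : OnePoint Y)} with hU
  have hfmem : ∀ i ∈ J, ((f i : Y) : OnePoint Y) ∈ S i := by
    intro i hi
    have hi' : ((((↑) : Y → OnePoint Y)) ⁻¹' (S i)).Infinite := hi
    have : f i ∈ (((↑) : Y → OnePoint Y)) ⁻¹' (S i) := by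
      simp only [hf, dif_pos hi']
      exact hi'.nonempty.some_mem
    exact this
  have hUS : ∀ i, U i ⊆ S i ∧ U i ∈ 𝓝[S i] (∞ : OnePoint Y) := by
    intro i
    by_cases hi : ((((↑) : Y → OnePoint Y)) ⁻¹' (S i)).Infinite
    · constructor
      · simp only [hU, if_pos hi]
        exact Set.diff_subset
      · simp only [hU, if_pos hi]
        rw [Set.diff_eq]
        exact inter_mem_nhdsWithin (S i) (compl_singleton_mem_nhds_infty' (f i))
    · have hfin : ((((↑) : Y → OnePoint Y)) ⁻¹' (S i)).Finite := Set.not_infinite.1 hi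
      constructor
      · simp only [hU, if_neg hi]
        exact Set.singleton_subset_iff.2 (hmemS i)
      · simp only [hU, if_neg hi]
        have hV : ((((↑) : Y → OnePoint Y) '' ((((↑) : Y → OnePoint Y)) ⁻¹' (S i)))ᶜ :
            Set (OnePoint Y)) ∈ 𝓝 (∞ : OnePoint Y) := by
          rw [mem_nhds_infty_iff'']
          constructor
          · simp only [Set.mem_compl_iff, Set.mem_image]
            rintro ⟨z, -, hz⟩; exact OnePoint.coe_ne_infty z hz
          · rw [Set.preimage_compl, compl_compl,
              Set.preimage_image_eq _ OnePoint.coe_injective]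
            exact hfin
        refine mem_of_superset (inter_mem_nhdsWithin (S i) hV) ?_
        rintro z ⟨hz1, hz2⟩
        cases z with
        | infty => rfl
        | coe w => exact absurd (Set.mem_image_of_mem ((↑) : Y → OnePoint Y) hz1) hz2
  have hbigU := hbig U hUS
  obtain ⟨-, hWfin⟩ := mem_nhds_infty_iff''.1 hbigU
  set W : Set Y := ((((↑) : Y → OnePoint Y)) ⁻¹' (⋃ i, U i))ᶜ with hW
  have hnotmem : ∀ i ∈ J, ∀ j, ((f i : Y) : OnePoint Y) ∉ U j := by
    intro i hi j hmem
    rcases eq_or_ne j i with rfl | hne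
    · have hi' : ((((↑) : Y → OnePoint Y)) ⁻¹' (S j)).Infinite := hi
      rw [hU] at hmem
      simp only [if_pos hi'] at hmem
      exact hmem.2 rfl
    · have h1 : ((f i : Y) : OnePoint Y) ∈ S j := (hUS j).1 hmem
      have h2 : ((f i : Y) : OnePoint Y) ∈ S i ∩ S j := ⟨hfmem i hi, h1⟩
      rw [hind i j (Ne.symm hne)] at h2
      exact OnePoint.coe_ne_infty (f i) (core_subset h2)
  have hfW : ∀ i ∈ J, f i ∈ W := by
    intro i hi
    simp only [hW, Set.mem_compl_iff, Set.mem_preimage, Set.mem_iUnion, not_exists]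
    exact fun j => hnotmem i hi j
  have hfinj : Set.InjOn f J := by
    intro i hi i' hi' hii'
    by_contra hne
    have h2 : ((f i : Y) : OnePoint Y) ∈ S i ∩ S i' := ⟨hfmem i hi, by rw [hii']; exact hfmem i' hi'⟩
    rw [hind i i' hne] at h2
    exact OnePoint.coe_ne_infty (f i) (core_subset h2)
  have hJfin : J.Finite :=
    Set.Finite.of_finite_image (hWfin.subset (Set.image_subset_iff.2 hfW)) hfinj
  have hsub : (((↑) : Y → OnePoint Y)) ⁻¹' (⋃ i, U i) ⊆
      ⋃ i ∈ J, (((↑) : Y → OnePoint Y)) ⁻¹' (S i) := by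
    intro y hy
    obtain ⟨j, hj⟩ := Set.mem_iUnion.1 hy
    by_cases hjJ : ((((↑) : Y → OnePoint Y)) ⁻¹' (S j)).Infinite
    · exact Set.mem_biUnion hjJ ((hUS j).1 hj)
    · rw [hU] at hj
      simp only [if_neg hjJ] at hj
      exact absurd hj (OnePoint.coe_ne_infty y)
  have hcnt : ((((↑) : Y → OnePoint Y)) ⁻¹' (⋃ i, U i)).Countable :=
    (hJfin.countable.biUnion fun i _ => wellbased_countable (hwb i)).mono hsub
  refine hY (Set.countable_univ_iff.1 ?_)
  have : (Set.univ : Set Y) ⊆ (((↑) : Y → OnePoint Y)) ⁻¹' (⋃ i, U i) ∪ W := by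
    intro y _
    by_cases h : ((y : OnePoint Y)) ∈ ⋃ i, U i
    · exact Or.inl h
    · exact Or.inr h
  exact (hcnt.union hWfin.countable).mono this
end Aux2


/-- The one-point compactification of an uncountable discrete space is strongly
Fréchet but not first-countable at the point at infinity; consequently it admits
no independent spoke system at that point. -/
theorem stmt_17 {Y : Type u} [TopologicalSpace Y] [DiscreteTopology Y]
    (hY : ¬ Countable Y) :
    (∀ p : OnePoint Y, StronglyFrechetAt p) ∧
    ¬ FirstCountableAt (OnePoint.infty : OnePoint Y) ∧
    ¬ ∃ (I : Type u) (S : I → Set (OnePoint Y)),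
        IsIndepSpokeSystem (OnePoint.infty : OnePoint Y) S :=
  ⟨fun p => stronglyFrechet_onePoint p, not_firstCountable hY, no_indep_spoke hY⟩
end

section
/- Let X be a space, x ∈ X, and let (S_i)_{i∈I} be a spoke system for x. If (x_n)_{n<ω} is a sequence contained in X ∖ N_x that clusters at x, then there exists i ∈ I such that (x_n) has a subsequence lying in S_i that converges to x. -/
open Filter Topology Set

universe u v

/-- Lemma 4.7: if `(S i)` is a spoke system for `x` and a sequence contained in
`X \ N_x` clusters at `x`, then some spoke contains a subsequence converging
to `x`. -/
theorem stmt_18 {X : Type u} [TopologicalSpace X] {I : Type v} (x : X)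
    (S : I → Set X) (h : IsSpokeSystem x S) (u : ℕ → X)
    (hu : ∀ n, u n ∉ NbhdCore x)
    (hcluster : ∀ U ∈ nhds x, ∀ N : ℕ, ∃ n ≥ N, u n ∈ U) :
    ∃ (i : I) (φ : ℕ → ℕ), StrictMono φ ∧ (∀ n, u (φ n) ∈ S i) ∧
      Filter.Tendsto (u ∘ φ) Filter.atTop (nhds x) := by
  by_contra hcon
  push_neg at hcon
  obtain ⟨hne, hcore, hxS, hwb, hunion, hbase⟩ := h
  have hW : ∀ n, ∃ W, W ∈ nhds x ∧ u n ∉ W := by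
    intro n
    have h1 := hu n
    simp only [NbhdCore, Set.mem_sInter, Set.mem_setOf_eq, not_forall] at h1
    obtain ⟨Wn, hW1, hW2⟩ := h1
    exact ⟨Wn, hW1, hW2⟩
  choose W hWmem hWnot using hW
  have key : ∀ i, ∃ U, U ⊆ S i ∧ U ∈ nhdsWithin x (S i) ∧ ∀ n, u n ∉ U := by
    intro i
    obtain ⟨B, hB1, hB2, hchain, -⟩ := hwb i
    have hb : ∀ n, ∃ b, b ∈ B ∧ u n ∉ b := by
      intro n
      obtain ⟨b, hbB, hbsub⟩ := hB2 (W n ∩ S i) Set.inter_subset_right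
        (Filter.inter_mem (mem_nhdsWithin_of_mem_nhds (hWmem n)) self_mem_nhdsWithin)
      exact ⟨b, hbB, fun hmem => hWnot n (hbsub hmem).1⟩
    choose b hbB hbnot using hb
    by_cases hlb : ∃ c ∈ B, ∀ n, c ⊆ b n
    · obtain ⟨c, hcB, hc⟩ := hlb
      exact ⟨c, (hB1 c hcB).1, (hB1 c hcB).2, fun n hn => hbnot n (hc n hn)⟩
    push_neg at hlb
    have hbase' : ∀ V ∈ nhds x, ∃ n, b n ⊆ V ∩ S i := by
      intro V hV
      obtain ⟨c, hcB, hcsub⟩ := hB2 (V ∩ S i) Set.inter_subset_right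
        (Filter.inter_mem (mem_nhdsWithin_of_mem_nhds hV) self_mem_nhdsWithin)
      obtain ⟨n, hn⟩ := hlb c hcB
      rcases eq_or_ne c (b n) with rfl | hne'
      · exact absurd subset_rfl hn
      rcases hchain hcB (hbB n) hne' with h1 | h1
      · exact absurd h1 hn
      exact ⟨n, h1.trans hcsub⟩
    by_cases hfin : ∃ U, U ⊆ S i ∧ U ∈ nhdsWithin x (S i) ∧ {n | u n ∈ U}.Finite
    · obtain ⟨U, hU1, hU2, hU3⟩ := hfin
      refine ⟨U ∩ ⋂ n ∈ hU3.toFinset, W n, fun y hy => hU1 hy.1,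
        Filter.inter_mem hU2 ((Filter.biInter_finset_mem _).2
          fun n _ => mem_nhdsWithin_of_mem_nhds (hWmem n)), ?_⟩
      intro n hn
      have hnT : n ∈ hU3.toFinset := hU3.mem_toFinset.2 hn.1
      exact hWnot n (Set.mem_iInter₂.1 hn.2 n hnT)
    · push_neg at hfin
      exfalso
      have hinf : ∀ c ∈ B, {n | u n ∈ c}.Infinite :=
        fun c hcB => hfin c (hB1 c hcB).1 (hB1 c hcB).2
      have hmin : ∀ n, ∃ c, c ∈ B ∧ ∀ m ≤ n, c ⊆ b m := by
        intro n
        induction n with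
        | zero => exact ⟨b 0, hbB 0, fun m hm => by rw [Nat.le_zero.1 hm]⟩
        | succ k ih =>
          obtain ⟨c, hcB, hc⟩ := ih
          have step : ∀ d, d ∈ B → d ⊆ c → d ⊆ b (k+1) →
              ∃ c', c' ∈ B ∧ ∀ m ≤ k + 1, c' ⊆ b m := by
            intro d hdB hd1 hd2
            refine ⟨d, hdB, fun m hm => ?_⟩
            rcases Nat.lt_succ_iff_lt_or_eq.1 (Nat.lt_succ_of_le hm) with h' | h'
            · exact hd1.trans (hc m (Nat.lt_succ_iff.1 h'))
            · rw [h']; exact hd2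
          rcases eq_or_ne c (b (k+1)) with h' | hne'
          · exact step c hcB subset_rfl (h' ▸ subset_rfl)
          rcases hchain hcB (hbB (k+1)) hne' with h1 | h1
          · exact step c hcB subset_rfl h1
          · exact step (b (k+1)) (hbB (k+1)) h1 subset_rfl
      choose c hcB hcsub using hmin
      have hstep : ∀ n N : ℕ, ∃ m, N < m ∧ u m ∈ c n := by
        intro n N
        obtain ⟨m, hm⟩ := ((hinf (c n) (hcB n)).diff (Set.finite_le_nat N)).nonempty
        exact ⟨m, Nat.lt_of_not_le (by simpa using hm.2), hm.1⟩
      choose F hF1 hF2 using hstep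
      let φ : ℕ → ℕ := fun k => Nat.rec (F 0 0) (fun k ih => F (k+1) ih) k
      have hmem : ∀ k, u (φ k) ∈ c k := by
        intro k
        cases k with
        | zero => exact hF2 0 0
        | succ k => exact hF2 (k+1) (φ k)
      have hmono : StrictMono φ :=
        strictMono_nat_of_lt_succ (fun k => hF1 (k+1) (φ k))
      have hSmem : ∀ k, u (φ k) ∈ S i := fun k => (hB1 (c k) (hcB k)).1 (hmem k)
      refine hcon i φ hmono hSmem ?_
      refine Filter.tendsto_def.2 fun V hV => ?_
      obtain ⟨n, hn⟩ := hbase' V hV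
      refine Filter.mem_of_superset (Filter.mem_atTop n) fun k hk => ?_
      exact (hn (hcsub k n hk (hmem k))).1
  choose U hU1 hU2 hU3 using key
  have hmemU : (⋃ i, U i) ∈ nhds x := hunion U (fun i => ⟨hU1 i, hU2 i⟩)
  obtain ⟨n, -, hn⟩ := hcluster _ hmemU 0
  obtain ⟨i, hi⟩ := Set.mem_iUnion.1 hn
  exact hU3 i n hi
end

section
/- Let X be the plane ℝ² retopologized so that every nonzero point is isolated and the origin 0 has neighbourhood base consisting of all sets of the form ⋃_{x≠0} B_{x,n_x}, where for nonzero x and n ∈ ℕ⁺, B_{x,n} := B(0, 1/n) ∩ S_x, with S_x := {y ∈ ℝ² : |y − x| = |x|} the circle through 0 centred at x, B(0,ε) the Euclidean ball, and (n_x)_{x≠0} an arbitrary assignment of positive integers. Then X is a Fréchet-Urysohn space. -/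
open Filter Topology Set

/-- The circle through the origin centred at `x` (Euclidean norm). -/
def circleThrough0 (x : EuclideanSpace ℝ (Fin 2)) : Set (EuclideanSpace ℝ (Fin 2)) :=
  {y | ‖y - x‖ = ‖x‖}

/-- `B_{x,n} = B(0, 1/n) ∩ S_x`. -/
def Bxn (x : EuclideanSpace ℝ (Fin 2)) (n : ℕ+) : Set (EuclideanSpace ℝ (Fin 2)) :=
  {y | ‖y‖ < 1 / (n : ℝ)} ∩ circleThrough0 x

/-- Theorem 4.9 (first part): the plane retopologized so that nonzero points are
isolated and the origin has neighbourhood base the sets `⋃_{x ≠ 0} B_{x, n x}`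
is Fréchet–Urysohn. -/
theorem stmt_19 (t : TopologicalSpace (EuclideanSpace ℝ (Fin 2)))
    (hiso : ∀ p : EuclideanSpace ℝ (Fin 2), p ≠ 0 → @nhds _ t p = pure p)
    (hbase : (@nhds _ t 0).HasBasis
      (fun _ : EuclideanSpace ℝ (Fin 2) → ℕ+ => True)
      (fun n => ⋃ x ∈ {x : EuclideanSpace ℝ (Fin 2) | x ≠ 0}, Bxn x (n x))) :
    ∀ (A : Set (EuclideanSpace ℝ (Fin 2))) (p : EuclideanSpace ℝ (Fin 2)),
      p ∈ @closure _ t A →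
      ∃ u : ℕ → EuclideanSpace ℝ (Fin 2), (∀ n, u n ∈ A) ∧
        Filter.Tendsto u Filter.atTop (@nhds _ t p) := by
  letI := t
  intro A p hp
  rw [mem_closure_iff_nhds] at hp
  by_cases hpA : p ∈ A
  · exact ⟨fun _ => p, fun _ => hpA, tendsto_const_nhds⟩
  by_cases hp0 : p = 0
  · subst hp0
    -- find a circle meeting A arbitrarily close to 0
    have hkey : ∃ x : EuclideanSpace ℝ (Fin 2), x ≠ 0 ∧
        ∀ n : ℕ+, (A ∩ Bxn x n).Nonempty := by
      by_contra h
      push_neg at h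
      have h' : ∀ x : EuclideanSpace ℝ (Fin 2), ∃ n : ℕ+,
          x ≠ 0 → A ∩ Bxn x n = ∅ := by
        intro x
        by_cases hx : x = 0
        · exact ⟨1, fun hne => absurd hx hne⟩
        · obtain ⟨n, hn⟩ := h x hx
          exact ⟨n, fun _ => hn⟩
      choose f hf using h'
      have hU : (⋃ x ∈ {x : EuclideanSpace ℝ (Fin 2) | x ≠ 0}, Bxn x (f x))
          ∈ @nhds _ t 0 := hbase.mem_of_mem trivial
      obtain ⟨y, hyU, hyA⟩ := hp _ hU
      simp only [Set.mem_iUnion, Set.mem_setOf_eq] at hyU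
      obtain ⟨x, hx, hy⟩ := hyU
      have : y ∈ A ∩ Bxn x (f x) := ⟨hyA, hy⟩
      rw [hf x hx] at this
      exact this
    obtain ⟨x, hx, hsel⟩ := hkey
    choose u hu using fun n : ℕ => hsel ⟨n + 1, Nat.succ_pos n⟩
    refine ⟨u, fun n => (hu n).1, ?_⟩
    rw [hbase.tendsto_right_iff]
    intro m _
    rw [eventually_atTop]
    refine ⟨(m x : ℕ), fun k hk => ?_⟩
    refine Set.mem_iUnion.mpr ⟨x, Set.mem_iUnion.mpr ⟨hx, ?_⟩⟩
    obtain ⟨-, hnorm, hcirc⟩ := hu k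
    refine ⟨show ‖u k‖ < _ from lt_of_lt_of_le hnorm ?_, hcirc⟩
    apply one_div_le_one_div_of_le
    · exact_mod_cast (m x).pos
    · exact_mod_cast Nat.le_succ_of_le hk
  · -- p ≠ 0: {p} is a neighbourhood, so p ∈ A, contradiction
    exfalso
    have : ({p} : Set (EuclideanSpace ℝ (Fin 2))) ∈ @nhds _ t p := by
      rw [hiso p hp0]; exact mem_pure.mpr rfl
    obtain ⟨y, hy, hyA⟩ := hp _ this
    rw [Set.mem_singleton_iff] at hy
    exact hpA (hy ▸ hyA)
end
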